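/- arXiv:2301.00791 — 7 statements merged into one kernel-verified Lean document; each statement's English description precedes it below -/
import Mathlib

section
/- Let q be a prime power and F a finite field with q elements, and let t > 0 be a real number. Define ν : ℕ → ℝ by ν(λ) = q^{−λ(λ−1)/2 − tλ} / ( η_q(λ) · ∏_{i=0}^{∞} (1 + q^{−i−t}) ). Then for every ρ ∈ ℕ, the series ∑_{λ=0}^{∞} ν(λ) · |Sur_F(F^λ, F^ρ)| converges and its sum equals q^{(ρ² + ρ)/2 − tρ}, where |Sur_F(F^λ, F^ρ)| denotes the number of surjective F-linear maps F^λ → F^ρ. In particular (taking ρ = 0), ∑_{λ=0}^{∞} ν(λ) = 1. -/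
open scoped BigOperators
open Filter Finset Function Module

/-- `η_q(k) = ∏_{i=1}^{k} (1 - q^{-i})`. -/
noncomputable def etaQ (q : ℝ) (k : ℕ) : ℝ :=
  ∏ i ∈ Finset.range k, (1 - q ^ (-(i : ℝ) - 1))

/-- The number of surjective `F`-linear maps `F^a → F^b`. -/
noncomputable def surCount (F : Type) [Field F] (a b : ℕ) : ℕ :=
  Nat.card {f : (Fin a → F) →ₗ[F] (Fin b → F) // Function.Surjective f}


open Filter Finset

noncomputable def eulerE (u : ℝ) (m : ℕ) : ℝ := ∏ i ∈ Finset.range m, (1 - u ^ (i + 1))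

noncomputable def eulerA (u x : ℝ) (m : ℕ) : ℝ := x ^ m * u ^ (m * (m - 1) / 2) / eulerE u m

lemma halfId (m : ℕ) : (m + 1) * m / 2 = m * (m - 1) / 2 + m := by
  rcases m with _ | k
  · simp
  · have e1 : (k + 1 + 1) * (k + 1) = (k + 1) * (k + 1 - 1) + 2 * (k + 1) := by
      simp only [Nat.add_sub_cancel]; ring
    omega

section Euler

variable {u x y : ℝ}

lemma eulerE_pos (hu0 : 0 < u) (hu1 : u < 1) (m : ℕ) : 0 < eulerE u m := by
  apply Finset.prod_pos
  intro i _
  have : u ^ (i + 1) < 1 := pow_lt_one₀ hu0.le hu1 (Nat.succ_ne_zero i)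
  linarith

lemma eulerE_succ (u : ℝ) (m : ℕ) : eulerE u (m + 1) = eulerE u m * (1 - u ^ (m + 1)) :=
  Finset.prod_range_succ _ m

lemma eulerA_zero (u x : ℝ) : eulerA u x 0 = 1 := by simp [eulerA, eulerE]

lemma eulerA_nonneg (hu0 : 0 < u) (hu1 : u < 1) (hx : 0 ≤ x) (m : ℕ) : 0 ≤ eulerA u x m :=
  div_nonneg (by positivity) (eulerE_pos hu0 hu1 m).le

lemma one_sub_pow_pos (hu0 : 0 < u) (hu1 : u < 1) (m : ℕ) : (0:ℝ) < 1 - u ^ (m + 1) := by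
  have : u ^ (m + 1) < 1 := pow_lt_one₀ hu0.le hu1 (Nat.succ_ne_zero m)
  linarith

lemma eulerA_succ (hu0 : 0 < u) (hu1 : u < 1) (x : ℝ) (m : ℕ) :
    eulerA u x (m + 1) = eulerA u x m * (x * u ^ m / (1 - u ^ (m + 1))) := by
  rw [eulerA, eulerA, eulerE_succ]
  have he := (eulerE_pos hu0 hu1 m).ne'
  have hf := (one_sub_pow_pos hu0 hu1 m).ne'
  have h3 : (m + 1) * (m + 1 - 1) / 2 = m * (m - 1) / 2 + m := by
    simpa using halfId m
  rw [h3, pow_add, pow_succ]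
  field_simp
  ring

lemma summable_eulerA (hu0 : 0 < u) (hu1 : u < 1) (hx : 0 ≤ x) : Summable (eulerA u x) := by
  apply summable_of_ratio_norm_eventually_le (r := 1 / 2) (by norm_num)
  have h0 : Tendsto (fun m : ℕ => x * u ^ m) atTop (nhds 0) := by
    simpa using (tendsto_pow_atTop_nhds_zero_of_lt_one hu0.le hu1).const_mul x
  have hev : ∀ᶠ m : ℕ in atTop, x * u ^ m ≤ (1 - u) / 2 :=
    h0.eventually (ge_mem_nhds (show (0:ℝ) < (1 - u)/2 by linarith))
  filter_upwards [hev] with m hm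
  rw [eulerA_succ hu0 hu1, norm_mul]
  have hb : 0 ≤ eulerA u x m := eulerA_nonneg hu0 hu1 hx m
  have h1m : 1 - u ≤ 1 - u ^ (m + 1) := by
    have : u ^ (m + 1) ≤ u := pow_le_of_le_one hu0.le hu1.le (Nat.succ_ne_zero m)
    linarith
  have hpos := one_sub_pow_pos hu0 hu1 m
  have hq : x * u ^ m / (1 - u ^ (m + 1)) ≤ 1 / 2 := by
    rw [div_le_iff₀ hpos]
    calc x * u ^ m ≤ (1 - u) / 2 := hm
    _ ≤ (1 - u ^ (m + 1)) / 2 := by linarith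
    _ = 1 / 2 * (1 - u ^ (m + 1)) := by ring
  have hqn : 0 ≤ x * u ^ m / (1 - u ^ (m + 1)) := by positivity
  rw [Real.norm_of_nonneg hqn, mul_comm]
  exact mul_le_mul_of_nonneg_right hq (by simpa using hb)

noncomputable def eulerS (u x : ℝ) : ℝ := ∑' m, eulerA u x m

lemma hasSum_eulerA (hu0 : 0 < u) (hu1 : u < 1) (hx : 0 ≤ x) :
    HasSum (eulerA u x) (eulerS u x) := (summable_eulerA hu0 hu1 hx).hasSum

lemma eulerA_rec (hu0 : 0 < u) (hu1 : u < 1) (x : ℝ) (m : ℕ) :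
    eulerA u x (m + 1) = eulerA u (x * u) (m + 1) + x * eulerA u (x * u) m := by
  have hmul : ∀ k : ℕ, eulerA u (x * u) k = eulerA u x k * u ^ k := by
    intro k
    rw [eulerA, eulerA, mul_pow]
    ring
  have hf := (one_sub_pow_pos hu0 hu1 m).ne'
  rw [hmul, hmul, eulerA_succ hu0 hu1 x m]
  set A := eulerA u x m with hA
  set w := u ^ (m + 1) with hw
  field_simp
  ring

lemma eulerS_rec (hu0 : 0 < u) (hu1 : u < 1) (hx : 0 ≤ x) :
    HasSum (eulerA u x) ((1 + x) * eulerS u (x * u)) := by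
  have hxu : 0 ≤ x * u := mul_nonneg hx hu0.le
  have h1 := hasSum_eulerA hu0 hu1 hxu
  have h2 : HasSum (fun m => x * eulerA u (x * u) m) (x * eulerS u (x * u)) := h1.mul_left x
  set f' : ℕ → ℝ := fun m => if m = 0 then 0 else x * eulerA u (x * u) (m - 1) with hf'
  have h2' : HasSum f' (x * eulerS u (x * u)) := by
    have : HasSum (fun n => f' (n + 1)) (x * eulerS u (x * u)) := by
      simpa [hf'] using h2
    have := (hasSum_nat_add_iff 1).mp this
    simpa [hf'] using this
  have h3 := h1.add h2'
  have heq : (fun m => eulerA u (x * u) m + f' m) = eulerA u x := by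
    funext m
    rcases m with _ | k
    · simp [hf', eulerA_zero]
    · simp only [hf', Nat.succ_ne_zero, if_false, Nat.add_sub_cancel]
      rw [eulerA_rec hu0 hu1 x k]
  rw [heq] at h3
  convert h3 using 1
  ring

lemma eulerS_eq_rec (hu0 : 0 < u) (hu1 : u < 1) (hx : 0 ≤ x) :
    eulerS u x = (1 + x) * eulerS u (x * u) :=
  (hasSum_eulerA hu0 hu1 hx).unique (eulerS_rec hu0 hu1 hx)

lemma one_le_eulerS (hu0 : 0 < u) (hu1 : u < 1) (hx : 0 ≤ x) : 1 ≤ eulerS u x := by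
  have h := hasSum_eulerA hu0 hu1 hx
  have := le_hasSum h 0 (fun j _ => eulerA_nonneg hu0 hu1 hx j)
  simpa [eulerA_zero] using this

lemma eulerS_le (hu0 : 0 < u) (hu1 : u < 1) (hy0 : 0 ≤ y) (hy1 : y ≤ 1) :
    eulerS u y ≤ 1 + y * eulerS u 1 := by
  have hAy : ∀ k, eulerA u y k = y ^ k * eulerA u 1 k := by
    intro k; rw [eulerA, eulerA]; ring
  have hy := hasSum_eulerA hu0 hu1 hy0
  have h1 := hasSum_eulerA hu0 hu1 (zero_le_one (α := ℝ))
  have hshy : HasSum (fun n => eulerA u y (n + 1)) (eulerS u y - 1) := by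
    rw [hasSum_nat_add_iff 1]
    simpa [eulerA_zero] using hy
  have hsh1 : HasSum (fun n => eulerA u 1 (n + 1)) (eulerS u 1 - 1) := by
    rw [hasSum_nat_add_iff 1]
    simpa [eulerA_zero] using h1
  have hle : eulerS u y - 1 ≤ y * (eulerS u 1 - 1) := by
    refine hasSum_le (fun n => ?_) hshy (hsh1.mul_left y)
    rw [hAy]
    have h1k : 0 ≤ eulerA u 1 (n + 1) := eulerA_nonneg hu0 hu1 zero_le_one _
    have : y ^ (n + 1) ≤ y := pow_le_of_le_one hy0 hy1 (Nat.succ_ne_zero n)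
    exact mul_le_mul_of_nonneg_right this h1k
  have h1S : 0 ≤ eulerS u 1 - 1 := by
    have := one_le_eulerS hu0 hu1 (zero_le_one (α := ℝ)); linarith
  nlinarith [mul_nonneg hy0 h1S]

lemma eulerS_prod_mul (hu0 : 0 < u) (hu1 : u < 1) (hx : 0 ≤ x) (N : ℕ) :
    eulerS u x = (∏ i ∈ Finset.range N, (1 + x * u ^ i)) * eulerS u (x * u ^ N) := by
  induction N with
  | zero => simp
  | succ n ih =>
      rw [ih, Finset.prod_range_succ]
      have h := eulerS_eq_rec hu0 hu1 (x := x * u ^ n) (mul_nonneg hx (by positivity))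
      rw [mul_assoc, pow_succ, ← mul_assoc x (u ^ n) u, ← h]

lemma tendsto_eulerS_one (hu0 : 0 < u) (hu1 : u < 1) (hx : 0 ≤ x) :
    Tendsto (fun N : ℕ => eulerS u (x * u ^ N)) atTop (nhds 1) := by
  have h0 : Tendsto (fun N : ℕ => x * u ^ N) atTop (nhds 0) := by
    simpa using (tendsto_pow_atTop_nhds_zero_of_lt_one hu0.le hu1).const_mul x
  have hub : Tendsto (fun N : ℕ => 1 + x * u ^ N * eulerS u 1) atTop (nhds 1) := by
    have := (h0.mul_const (eulerS u 1)).const_add 1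
    simpa using this
  apply tendsto_of_tendsto_of_tendsto_of_le_of_le' tendsto_const_nhds hub
  · exact Eventually.of_forall fun N =>
      one_le_eulerS hu0 hu1 (mul_nonneg hx (by positivity))
  · have hev : ∀ᶠ N : ℕ in atTop, x * u ^ N ≤ 1 :=
      h0.eventually (ge_mem_nhds one_pos)
    filter_upwards [hev] with N hN
    have := eulerS_le hu0 hu1 (mul_nonneg hx (by positivity)) hN
    linarith

lemma tendsto_prod_eulerS (hu0 : 0 < u) (hu1 : u < 1) (hx : 0 ≤ x) :
    Tendsto (fun N : ℕ => ∏ i ∈ Finset.range N, (1 + x * u ^ i)) atTop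
      (nhds (eulerS u x)) := by
  have hlim := tendsto_eulerS_one hu0 hu1 hx
  have hne : ∀ N : ℕ, eulerS u (x * u ^ N) ≠ 0 := fun N => by
    have := one_le_eulerS hu0 hu1 (x := x * u ^ N) (mul_nonneg hx (by positivity))
    linarith
  have heq : (fun N : ℕ => ∏ i ∈ Finset.range N, (1 + x * u ^ i)) =
      fun N => eulerS u x / eulerS u (x * u ^ N) := by
    funext N
    rw [eulerS_prod_mul hu0 hu1 hx N, mul_div_assoc, div_self (hne N), mul_one]
  rw [heq]
  have h := (tendsto_const_nhds (x := eulerS u x)).div hlim one_ne_zero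
  rw [div_one] at h
  exact h

lemma hasProd_euler (hu0 : 0 < u) (hu1 : u < 1) (hx : 0 ≤ x) :
    HasProd (fun i : ℕ => 1 + x * u ^ i) (eulerS u x) := by
  have hone : ∀ i : ℕ, (1:ℝ) ≤ 1 + x * u ^ i := fun i => by
    have : 0 ≤ x * u ^ i := mul_nonneg hx (by positivity)
    linarith
  set g : Finset ℕ → ℝ := fun s => ∏ i ∈ s, (1 + x * u ^ i) with hg
  have hmono : Monotone g := by
    intro s t hst
    show (∏ i ∈ s, (1 + x * u ^ i)) ≤ ∏ i ∈ t, (1 + x * u ^ i)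
    rw [← Finset.prod_sdiff (f := fun i : ℕ => 1 + x * u ^ i) hst]
    have h1 : (1:ℝ) ≤ ∏ i ∈ t \ s, (1 + x * u ^ i) := by
      have := Finset.prod_le_prod (s := t \ s) (f := fun _ : ℕ => (1:ℝ))
        (g := fun i => 1 + x * u ^ i) (fun i _ => zero_le_one) (fun i _ => hone i)
      simpa using this
    have h2 : (0:ℝ) ≤ ∏ i ∈ s, (1 + x * u ^ i) :=
      Finset.prod_nonneg fun i _ => by linarith [hone i]
    nlinarith
  have hrange : Tendsto (fun N : ℕ => g (Finset.range N)) atTop (nhds (eulerS u x)) :=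
    tendsto_prod_eulerS hu0 hu1 hx
  have hrange_mono : Monotone fun N : ℕ => g (Finset.range N) :=
    fun a b hab => hmono (Finset.range_subset_range.mpr hab)
  have hub : ∀ s : Finset ℕ, g s ≤ eulerS u x := by
    intro s
    obtain ⟨N, hN⟩ := s.exists_nat_subset_range
    exact (hmono hN).trans (hrange_mono.ge_of_tendsto hrange N)
  have hlub : IsLUB (Set.range g) (eulerS u x) := by
    constructor
    · rintro _ ⟨s, rfl⟩; exact hub s
    · intro b hb
      refine le_of_tendsto hrange (Eventually.of_forall fun N => ?_)
      exact hb ⟨Finset.range N, rfl⟩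
  exact tendsto_atTop_isLUB hmono hlub
lemma mulVecLin_surjective_iff {F : Type} [Field F] {a b : ℕ}
    (M : Matrix (Fin b) (Fin a) F) :
    Surjective M.mulVecLin ↔ LinearIndependent F M := by
  show Surjective M.mulVecLin ↔ LinearIndependent F M.row
  rw [linearIndependent_iff_card_eq_finrank_span, ← LinearMap.range_eq_top]
  have hrank : M.rank = (Set.range M.row).finrank F := by
    rw [Matrix.rank_eq_finrank_span_row]; rfl
  rw [← hrank, Fintype.card_fin]
  unfold Matrix.rank
  constructor
  · intro h; rw [h, finrank_top, Module.finrank_fintype_fun_eq_card, Fintype.card_fin]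
  · intro h
    apply Submodule.eq_top_of_finrank_eq
    rw [← h, Module.finrank_fintype_fun_eq_card, Fintype.card_fin]

lemma surCount_eq {F : Type} [Field F] [Fintype F] {a b : ℕ} (h : b ≤ a) :
    surCount F a b =
      ∏ i ∈ Finset.range b, (Fintype.card F ^ a - Fintype.card F ^ i) := by
  classical
  have e1 : {f : (Fin a → F) →ₗ[F] (Fin b → F) // Surjective f} ≃
      {s : Fin b → (Fin a → F) // LinearIndependent F s} :=
    (LinearMap.toMatrix' : ((Fin a → F) →ₗ[F] (Fin b → F)) ≃ₗ[F]
        Matrix (Fin b) (Fin a) F).toEquiv.subtypeEquiv (by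
      intro f
      rw [← mulVecLin_surjective_iff]
      have : (LinearMap.toMatrix' f).mulVecLin = f := by
        rw [← Matrix.toLin'_apply', Matrix.toLin'_toMatrix']
      show Surjective f ↔ _
      conv_lhs => rw [← this]
      rfl)
  rw [surCount, Nat.card_congr e1]
  rw [card_linearIndependent (K := F) (V := Fin a → F)
    (by rw [Module.finrank_fintype_fun_eq_card, Fintype.card_fin]; exact h)]
  rw [Module.finrank_fintype_fun_eq_card, Fintype.card_fin, Finset.prod_range]

lemma surCount_of_lt {F : Type} [Field F] [Fintype F] {a b : ℕ} (h : a < b) :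
    surCount F a b = 0 := by
  have : IsEmpty {f : (Fin a → F) →ₗ[F] (Fin b → F) // Surjective f} := by
    constructor
    rintro ⟨f, hf⟩
    have h1 : finrank F (Fin b → F) ≤ finrank F (Fin a → F) := by
      have := f.finrank_range_le
      rwa [LinearMap.range_eq_top.mpr hf, finrank_top] at this
    simp [Module.finrank_fintype_fun_eq_card] at h1
    omega
  simp [surCount, Nat.card_of_isEmpty]

lemma castHalf (m : ℕ) : ((m * (m - 1) / 2 : ℕ) : ℝ) = (m : ℝ) * ((m : ℝ) - 1) / 2 := by
  rcases m with _ | k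
  · simp
  · have hdvd : 2 ∣ (k + 1) * (k + 1 - 1) := by
      simp only [Nat.add_sub_cancel]
      rcases Nat.even_or_odd k with h | h
      · exact Dvd.dvd.mul_left h.two_dvd _
      · exact Dvd.dvd.mul_right (Odd.add_one h).two_dvd _
    have h2 : ((k + 1) * (k + 1 - 1) / 2 : ℕ) * 2 = (k + 1) * (k + 1 - 1) :=
      Nat.div_mul_cancel hdvd
    have := congrArg (fun n : ℕ => (n : ℝ)) h2
    push_cast [Nat.add_sub_cancel] at this ⊢
    linarith

/-- Let `q` be a prime power, `F` a finite field with `q` elements, and `t > 0`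
a real number.  With `ν(λ) = q^{-λ(λ-1)/2 - tλ} / (η_q(λ) ∏_{i=0}^∞ (1 + q^{-i-t}))`, for
every `ρ ∈ ℕ` the series `∑_λ ν(λ) |Sur_F(F^λ, F^ρ)|` converges with sum
`q^{(ρ²+ρ)/2 - tρ}`; in particular (`ρ = 0`) `∑_λ ν(λ) = 1`. -/
theorem stmt_0 (q : ℕ) (hq : IsPrimePow q) (F : Type) [Field F] [Fintype F]
    (hF : Fintype.card F = q) (t : ℝ) (ht : 0 < t) (ν : ℕ → ℝ)
    (hν : ∀ l : ℕ, ν l =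
      (q : ℝ) ^ (-((l : ℝ) * ((l : ℝ) - 1)) / 2 - t * (l : ℝ)) /
        (etaQ (q : ℝ) l * ∏' i : ℕ, (1 + (q : ℝ) ^ (-(i : ℝ) - t)))) :
    (∀ ρ : ℕ,
      HasSum (fun l : ℕ => ν l * (surCount F l ρ : ℝ))
        ((q : ℝ) ^ ((((ρ : ℝ) ^ 2 + (ρ : ℝ)) / 2) - t * (ρ : ℝ)))) ∧
    HasSum ν 1 := by
  have hq2 : 2 ≤ q := hq.two_le
  set Q : ℝ := (q : ℝ) with hQdef
  have hQ1 : 1 < Q := by rw [hQdef]; exact_mod_cast Nat.lt_of_lt_of_le one_lt_two hq2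
  have hQ0 : 0 < Q := lt_trans one_pos hQ1
  set u : ℝ := Q⁻¹ with hudef
  have hu0 : 0 < u := inv_pos.mpr hQ0
  have hu1 : u < 1 := inv_lt_one_of_one_lt₀ hQ1
  set x : ℝ := Q ^ (-t) with hxdef
  have hx0 : 0 < x := Real.rpow_pos_of_pos hQ0 _
  -- basic rpow bridges
  have hupow : ∀ k : ℕ, u ^ k = Q ^ (-(k : ℝ)) := by
    intro k
    rw [hudef, inv_pow, ← Real.rpow_natCast Q k, ← Real.rpow_neg hQ0.le]
  have hxpow : ∀ k : ℕ, x ^ k = Q ^ (-(t * k)) := by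
    intro k
    rw [hxdef, ← Real.rpow_natCast (Q ^ (-t)) k, ← Real.rpow_mul hQ0.le]
    ring_nf
  have hQpow : ∀ k : ℕ, (Q : ℝ) ^ (k : ℕ) = Q ^ ((k : ℝ)) := fun k =>
    (Real.rpow_natCast Q k).symm
  -- etaQ = eulerE
  have hEta : ∀ l : ℕ, etaQ Q l = eulerE u l := by
    intro l
    refine Finset.prod_congr rfl fun i _ => ?_
    rw [hupow (i + 1)]
    congr 1
    push_cast
    ring
  -- tprod = eulerS u x
  have hterm : ∀ i : ℕ, 1 + Q ^ (-(i : ℝ) - t) = 1 + x * u ^ i := by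
    intro i
    rw [hupow i, hxdef, ← Real.rpow_add hQ0]
    ring_nf
  have hP : (∏' i : ℕ, (1 + Q ^ (-(i : ℝ) - t))) = eulerS u x := by
    rw [show (fun i : ℕ => 1 + Q ^ (-(i : ℝ) - t)) = fun i : ℕ => 1 + x * u ^ i from
      funext hterm]
    exact (hasProd_euler hu0 hu1 hx0.le).tprod_eq
  have hS1 : 1 ≤ eulerS u x := one_le_eulerS hu0 hu1 hx0.le
  have hSne : eulerS u x ≠ 0 := by linarith
  -- ν in euler terms
  have hnu : ∀ l : ℕ, ν l = eulerA u x l / eulerS u x := by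
    intro l
    rw [hν l, hP, hEta]
    rw [eulerA, div_div]
    congr 1
    rw [hxpow l, hupow (l * (l - 1) / 2), ← Real.rpow_add hQ0]
    congr 1
    rw [castHalf]
    ring
  have hnu2 : HasSum ν 1 := by
    have h := (hasSum_eulerA hu0 hu1 hx0.le).div_const (eulerS u x)
    rw [div_self hSne] at h
    exact HasSum.congr_fun h fun l => hnu l
  refine ⟨fun ρ => ?_, hnu2⟩
  set C : ℝ := Q ^ ((((ρ : ℝ) ^ 2 + (ρ : ℝ)) / 2) - t * (ρ : ℝ)) with hCdef
  -- cast of surCount for l = n + ρ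
  have hsur : ∀ n : ℕ, (surCount F (n + ρ) ρ : ℝ) =
      Q ^ ((n + ρ) * ρ : ℕ) * (eulerE u (n + ρ) / eulerE u n) := by
    intro n
    rw [surCount_eq (Nat.le_add_left ρ n), Nat.cast_prod]
    have hfac : ∀ i ∈ Finset.range ρ,
        ((Fintype.card F ^ (n + ρ) - Fintype.card F ^ i : ℕ) : ℝ) =
          Q ^ (n + ρ : ℕ) * (1 - u ^ (n + ρ - i)) := by
      intro i hi
      have hiρ : i < ρ := Finset.mem_range.mp hi
      have hile : i ≤ n + ρ := by omega
      rw [Nat.cast_sub (Nat.pow_le_pow_right Fintype.card_pos hile)]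
      push_cast [hF]
      rw [← hQdef, hudef, inv_pow]
      have hpe : Q ^ (n + ρ - i) * Q ^ i = Q ^ (n + ρ) := by
        rw [← pow_add]; congr 1; omega
      have hne0 : (Q : ℝ) ^ (n + ρ - i) ≠ 0 := by positivity
      rw [mul_sub, mul_one, sub_right_inj, eq_comm, inv_eq_one_div, mul_one_div, div_eq_iff hne0, ← hpe]
      ring
    rw [Finset.prod_congr rfl hfac, Finset.prod_mul_distrib, Finset.prod_const,
      Finset.card_range, ← pow_mul]
    congr 1
    -- ∏_{i<ρ} (1 - u^(n+ρ-i)) = eulerE u (n+ρ) / eulerE u n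
    have hE : eulerE u (n + ρ) = eulerE u n * ∏ j ∈ Finset.range ρ, (1 - u ^ (n + j + 1)) := by
      rw [eulerE, eulerE, Finset.prod_range_add]
    rw [hE, mul_div_cancel_left₀ _ (eulerE_pos hu0 hu1 n).ne']
    rw [← Finset.prod_range_reflect]
    refine Finset.prod_congr rfl fun j hj => ?_
    have hjρ : j < ρ := Finset.mem_range.mp hj
    have hee : n + ρ - (ρ - 1 - j) = n + j + 1 := by omega
    rw [hee]
  -- pointwise formula
  have hpt : ∀ n : ℕ, ν (n + ρ) * (surCount F (n + ρ) ρ : ℝ) =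
      C * (eulerA u x n / eulerS u x) := by
    intro n
    rw [hnu, hsur, eulerA, eulerA]
    have hEl := (eulerE_pos hu0 hu1 (n + ρ)).ne'
    have hEn := (eulerE_pos hu0 hu1 n).ne'
    have hkey : x ^ (n + ρ) * u ^ ((n + ρ) * (n + ρ - 1) / 2) * Q ^ ((n + ρ) * ρ : ℕ) =
        C * (x ^ n * u ^ (n * (n - 1) / 2)) := by
      rw [hxpow, hxpow, hupow, hupow, hQpow, hCdef,
        ← Real.rpow_add hQ0, ← Real.rpow_add hQ0, ← Real.rpow_add hQ0, ← Real.rpow_add hQ0]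
      congr 1
      rw [castHalf, castHalf]
      push_cast
      ring
    field_simp
    linear_combination hkey
  have hSsum : HasSum (fun n : ℕ => C * (eulerA u x n / eulerS u x)) C := by
    have h := ((hasSum_eulerA hu0 hu1 hx0.le).div_const (eulerS u x)).mul_left C
    rwa [div_self hSne, mul_one] at h
  have hshift : HasSum (fun n : ℕ => ν (n + ρ) * (surCount F (n + ρ) ρ : ℝ)) C :=
    HasSum.congr_fun hSsum hpt
  have hfin := (hasSum_nat_add_iff (f := fun l : ℕ => ν l * (surCount F l ρ : ℝ)) ρ).mp hshift
  have hzero : ∑ i ∈ Finset.range ρ, ν i * (surCount F i ρ : ℝ) = 0 := by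
    refine Finset.sum_eq_zero fun i hi => ?_
    rw [surCount_of_lt (Finset.mem_range.mp hi)]
    simp
  rw [hzero, add_zero] at hfin
  exact hfin
end Euler
end

section
/- Let q be a prime power. Then Pf_q(t,m) > 0 for every real number t ≥ 0 and every m ∈ ℕ. -/
open scoped BigOperators

/-- `Pf_q(t,m) = ∑_{e=0}^{m} (-1)^e q^{-(t+1)e} η_q(m) / (η_q(e) η_q(m-e))`. -/
noncomputable def Pf (q t : ℝ) (m : ℕ) : ℝ :=
  ∑ e ∈ Finset.range (m + 1),
    (-1 : ℝ) ^ e * q ^ (-(t + 1) * (e : ℝ)) * etaQ q m / (etaQ q e * etaQ q (m - e))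

lemma etaQ_succ (Q : ℝ) (k : ℕ) :
    etaQ Q (k + 1) = etaQ Q k * (1 - Q ^ (-(k : ℝ) - 1)) :=
  Finset.prod_range_succ _ k

lemma etaQ_pos {Q : ℝ} (hQ : 1 < Q) (k : ℕ) : 0 < etaQ Q k := by
  apply Finset.prod_pos
  intro i _
  have h1 : Q ^ (-(i : ℝ) - 1) < 1 := by
    apply Real.rpow_lt_one_of_one_lt_of_neg hQ
    have : (0 : ℝ) ≤ (i : ℝ) := Nat.cast_nonneg i
    linarith
  linarith

/-- Alternating sums of strictly decreasing positive sequences are positive. -/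
lemma alt_sum_pos (a : ℕ → ℝ) (n : ℕ) (hpos : ∀ e, e ≤ n → 0 < a e)
    (hdec : ∀ e, e + 1 ≤ n → a (e + 1) < a e) :
    0 < ∑ e ∈ Finset.range (n + 1), (-1 : ℝ) ^ e * a e ∧
      (Even n → a n ≤ ∑ e ∈ Finset.range (n + 1), (-1 : ℝ) ^ e * a e) := by
  induction n with
  | zero =>
    rw [Finset.sum_range_one]
    norm_num
    exact hpos 0 le_rfl
  | succ n ih =>
    have hpos' : ∀ e, e ≤ n → 0 < a e := fun e he => hpos e (le_trans he (Nat.le_succ n))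
    have hdec' : ∀ e, e + 1 ≤ n → a (e + 1) < a e :=
      fun e he => hdec e (le_trans he (Nat.le_succ n))
    obtain ⟨h1, h2⟩ := ih hpos' hdec'
    rw [Finset.sum_range_succ]
    rcases Nat.even_or_odd n with he | ho
    · have hsign : (-1 : ℝ) ^ (n + 1) = -1 := (he.add_one).neg_one_pow
      rw [hsign]
      have hd := hdec n le_rfl
      have han := h2 he
      constructor
      · nlinarith
      · intro hev
        rw [Nat.even_add_one] at hev
        exact absurd he hev
    · have hsign : (-1 : ℝ) ^ (n + 1) = 1 := (ho.add_one).neg_one_pow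
      rw [hsign]
      have hp := hpos (n + 1) le_rfl
      exact ⟨by linarith, fun _ => by linarith⟩

/-- For a prime power `q`, `Pf_q(t,m) > 0` for every real `t ≥ 0` and `m ∈ ℕ`. -/
theorem stmt_2 (q : ℕ) (hq : IsPrimePow q) (t : ℝ) (ht : 0 ≤ t) (m : ℕ) :
    0 < Pf (q : ℝ) t m := by
  have hq2 : 2 ≤ q := hq.two_le
  set Q : ℝ := (q : ℝ) with hQdef
  have hQ2 : (2 : ℝ) ≤ Q := by rw [hQdef]; exact_mod_cast hq2
  have hQ1 : 1 < Q := by linarith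
  have hQ0 : 0 < Q := by linarith
  have hQinv0 : 0 < Q⁻¹ := inv_pos.mpr hQ0
  have hQi : Q * Q⁻¹ = 1 := mul_inv_cancel₀ (ne_of_gt hQ0)
  set x : ℝ := Q ^ (-(t + 1)) with hxdef
  have hx0 : 0 < x := Real.rpow_pos_of_pos hQ0 _
  have hxle : x ≤ Q⁻¹ := by
    have h := Real.rpow_le_rpow_of_exponent_le (le_of_lt hQ1)
      (show -(t + 1) ≤ (-1 : ℝ) by linarith)
    rwa [Real.rpow_neg_one] at h
  have h3 : Q⁻¹ ≤ 1 - Q⁻¹ := by nlinarith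
  have hη : ∀ k, 0 < etaQ Q k := etaQ_pos hQ1
  have hfacpos : ∀ k : ℕ, 0 < 1 - Q ^ (-(k : ℝ) - 1) := by
    intro k
    have h1 : Q ^ (-(k : ℝ) - 1) < 1 := by
      apply Real.rpow_lt_one_of_one_lt_of_neg hQ1
      have : (0 : ℝ) ≤ (k : ℝ) := Nat.cast_nonneg k
      linarith
    linarith
  have hfacle : ∀ k : ℕ, Q ^ (-(k : ℝ) - 1) ≤ Q⁻¹ := by
    intro k
    have h := Real.rpow_le_rpow_of_exponent_le (le_of_lt hQ1)
      (show -(k : ℝ) - 1 ≤ (-1 : ℝ) by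
        have : (0 : ℝ) ≤ (k : ℝ) := Nat.cast_nonneg k
        linarith)
    rwa [Real.rpow_neg_one] at h
  set a : ℕ → ℝ :=
    fun e => Q ^ (-(t + 1) * (e : ℝ)) * etaQ Q m / (etaQ Q e * etaQ Q (m - e)) with ha
  have hapos : ∀ e, 0 < a e := by
    intro e
    exact div_pos (mul_pos (Real.rpow_pos_of_pos hQ0 _) (hη m)) (mul_pos (hη e) (hη _))
  have hpow : ∀ e : ℕ, Q ^ (-(t + 1) * (e : ℝ)) = x ^ e := by
    intro e
    rw [hxdef, ← Real.rpow_natCast (Q ^ (-(t + 1))) e, ← Real.rpow_mul (le_of_lt hQ0)]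
  have hdec : ∀ e, e + 1 ≤ m → a (e + 1) < a e := by
    intro e hem
    have hme : m - e = (m - e - 1) + 1 := by omega
    have hme2 : m - (e + 1) = m - e - 1 := by omega
    set j := m - e - 1 with hj
    have hB : 0 < Q ^ (-(j : ℝ) - 1) := Real.rpow_pos_of_pos hQ0 _
    have hA : 0 < 1 - Q ^ (-(e : ℝ) - 1) := hfacpos e
    have hBp : 0 < 1 - Q ^ (-(j : ℝ) - 1) := hfacpos j
    have hkey : x * (1 - Q ^ (-(j : ℝ) - 1)) < 1 - Q ^ (-(e : ℝ) - 1) := by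
      have h1 : x * (1 - Q ^ (-(j : ℝ) - 1)) < x := by nlinarith
      have h2 := hfacle e
      linarith
    have hP : 0 < x ^ e * etaQ Q m * etaQ Q e * etaQ Q j :=
      mul_pos (mul_pos (mul_pos (pow_pos hx0 e) (hη m)) (hη e)) (hη j)
    simp only [ha, hme2, hme, hpow, etaQ_succ]
    rw [div_lt_div_iff₀ (mul_pos (mul_pos (hη e) hA) (hη j))
      (mul_pos (hη e) (mul_pos (hη j) hBp)), pow_succ]
    nlinarith [mul_lt_mul_of_pos_left hkey hP]
  have hPf : Pf Q t m = ∑ e ∈ Finset.range (m + 1), (-1 : ℝ) ^ e * a e := by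
    unfold Pf
    apply Finset.sum_congr rfl
    intro e _
    simp only [ha]
    ring
  rw [hPf]
  exact (alt_sum_pos a m (fun e _ => hapos e) hdec).1
end

section
/- Let q be a prime power and m ∈ ℕ. Then Pf_q(0,m) = ∏_{j=1}^{⌈m/2⌉} (1 − q^{−(2j−1)}). -/
open scoped BigOperators

/- Auxiliary development with `x = q⁻¹` and natural-number powers. -/

noncomputable def etaP (x : ℝ) (k : ℕ) : ℝ :=
  ∏ i ∈ Finset.range k, (1 - x ^ (i + 1))

noncomputable def TB (x : ℝ) (m e : ℕ) : ℝ :=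
  if e ≤ m then etaP x m / (etaP x e * etaP x (m - e)) else 0

noncomputable def SS (x : ℝ) (m : ℕ) : ℝ :=
  ∑ e ∈ Finset.range (m + 1), (-1 : ℝ) ^ e * x ^ e * TB x m e

noncomputable def GG (x : ℝ) (m : ℕ) : ℝ :=
  ∑ e ∈ Finset.range (m + 1), (-1 : ℝ) ^ e * TB x m e

noncomputable def PP (x : ℝ) (m : ℕ) : ℝ :=
  ∏ j ∈ Finset.range ((m + 1) / 2), (1 - x ^ (2 * j + 1))

lemma one_sub_pow_pos_s4 (x : ℝ) (hx0 : 0 < x) (hx1 : x < 1) (k : ℕ) (hk : 1 ≤ k) :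
    0 < 1 - x ^ k := by
  have : x ^ k < 1 := pow_lt_one₀ hx0.le hx1 (by omega)
  linarith

lemma etaP_pos (x : ℝ) (hx0 : 0 < x) (hx1 : x < 1) (k : ℕ) : 0 < etaP x k := by
  refine Finset.prod_pos fun i _ => ?_
  exact one_sub_pow_pos_s4 x hx0 hx1 (i + 1) (by omega)

lemma etaP_ne (x : ℝ) (hx0 : 0 < x) (hx1 : x < 1) (k : ℕ) : etaP x k ≠ 0 :=
  (etaP_pos x hx0 hx1 k).ne'

lemma etaP_zero (x : ℝ) : etaP x 0 = 1 := by simp [etaP]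

lemma etaP_succ (x : ℝ) (k : ℕ) : etaP x (k + 1) = etaP x k * (1 - x ^ (k + 1)) := by
  simp [etaP, Finset.prod_range_succ]

lemma TB_zero (x : ℝ) (hx0 : 0 < x) (hx1 : x < 1) (m : ℕ) : TB x m 0 = 1 := by
  simp [TB, etaP_zero, div_self (etaP_ne x hx0 hx1 m)]

lemma TB_self (x : ℝ) (hx0 : 0 < x) (hx1 : x < 1) (m : ℕ) : TB x m m = 1 := by
  simp [TB, etaP_zero, div_self (etaP_ne x hx0 hx1 m)]

lemma TB_of_gt (x : ℝ) {m e : ℕ} (h : m < e) : TB x m e = 0 := by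
  simp [TB, Nat.not_le.mpr h]

lemma pascal1 (x : ℝ) (hx0 : 0 < x) (hx1 : x < 1) (m e : ℕ) (he : 1 ≤ e) :
    TB x (m + 1) e = TB x m e + x ^ (m + 1 - e) * TB x m (e - 1) := by
  rcases lt_trichotomy e (m + 1) with h | h | h
  · -- 1 ≤ e ≤ m
    have hem : e ≤ m := by omega
    have h1 : TB x (m + 1) e = etaP x (m + 1) / (etaP x e * etaP x (m + 1 - e)) := by
      simp [TB, Nat.le_succ_of_le hem]
    have h2 : TB x m e = etaP x m / (etaP x e * etaP x (m - e)) := by simp [TB, hem]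
    have h3 : TB x m (e - 1) = etaP x m / (etaP x (e - 1) * etaP x (m - e + 1)) := by
      have hle : e - 1 ≤ m := by omega
      have hsub : m - (e - 1) = m - e + 1 := by omega
      simp [TB, hle, hsub]
    have he1 : etaP x e = etaP x (e - 1) * (1 - x ^ e) := by
      have he' : e = (e - 1) + 1 := by omega
      rw [he', etaP_succ, Nat.add_sub_cancel]
    have hme : etaP x (m + 1 - e) = etaP x (m - e) * (1 - x ^ (m - e + 1)) := by
      have hs : m + 1 - e = (m - e) + 1 := by omega
      rw [hs, etaP_succ]
    have hM : etaP x (m + 1) = etaP x m * (1 - x ^ (m + 1)) := etaP_succ x m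
    have hxp : x ^ (m + 1) = x ^ (m - e + 1) * x ^ e := by
      rw [← pow_add]; congr 1; omega
    have hxr : x ^ (m + 1 - e) = x ^ (m - e + 1) := by congr 1; omega
    rw [h1, h2, h3, he1, hme, hM, hxp, hxr]
    have n1 : etaP x (e - 1) ≠ 0 := etaP_ne x hx0 hx1 _
    have n2 : etaP x (m - e) ≠ 0 := etaP_ne x hx0 hx1 _
    have n3 : (1 - x ^ e) ≠ 0 := (one_sub_pow_pos_s4 x hx0 hx1 e he).ne'
    have n4 : (1 - x ^ (m - e + 1)) ≠ 0 :=
      (one_sub_pow_pos_s4 x hx0 hx1 (m - e + 1) (by omega)).ne'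
    have hm1 : etaP x (m - e + 1) = etaP x (m - e) * (1 - x ^ (m - e + 1)) := etaP_succ x _
    rw [hm1]
    field_simp
    ring
  · -- e = m + 1
    subst h
    rw [TB_self x hx0 hx1, TB_of_gt x (by omega), Nat.sub_self, pow_zero,
      Nat.add_sub_cancel, TB_self x hx0 hx1]
    ring
  · -- e > m + 1
    rw [TB_of_gt x (by omega), TB_of_gt x (by omega : m < e), TB_of_gt x (by omega : m < e - 1)]
    ring

lemma pascal2 (x : ℝ) (hx0 : 0 < x) (hx1 : x < 1) (m e : ℕ) (he : 1 ≤ e) :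
    TB x (m + 1) e = x ^ e * TB x m e + TB x m (e - 1) := by
  rcases lt_trichotomy e (m + 1) with h | h | h
  · have hem : e ≤ m := by omega
    have h1 : TB x (m + 1) e = etaP x (m + 1) / (etaP x e * etaP x (m + 1 - e)) := by
      simp [TB, Nat.le_succ_of_le hem]
    have h2 : TB x m e = etaP x m / (etaP x e * etaP x (m - e)) := by simp [TB, hem]
    have h3 : TB x m (e - 1) = etaP x m / (etaP x (e - 1) * etaP x (m - e + 1)) := by
      have hle : e - 1 ≤ m := by omega
      have hsub : m - (e - 1) = m - e + 1 := by omega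
      simp [TB, hle, hsub]
    have he1 : etaP x e = etaP x (e - 1) * (1 - x ^ e) := by
      have he' : e = (e - 1) + 1 := by omega
      rw [he', etaP_succ, Nat.add_sub_cancel]
    have hme : etaP x (m + 1 - e) = etaP x (m - e) * (1 - x ^ (m - e + 1)) := by
      have hs : m + 1 - e = (m - e) + 1 := by omega
      rw [hs, etaP_succ]
    have hM : etaP x (m + 1) = etaP x m * (1 - x ^ (m + 1)) := etaP_succ x m
    have hxp : x ^ (m + 1) = x ^ e * x ^ (m - e + 1) := by
      rw [← pow_add]; congr 1; omega
    rw [h1, h2, h3, he1, hme, hM, hxp]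
    have n1 : etaP x (e - 1) ≠ 0 := etaP_ne x hx0 hx1 _
    have n2 : etaP x (m - e) ≠ 0 := etaP_ne x hx0 hx1 _
    have n3 : (1 - x ^ e) ≠ 0 := (one_sub_pow_pos_s4 x hx0 hx1 e he).ne'
    have n4 : (1 - x ^ (m - e + 1)) ≠ 0 :=
      (one_sub_pow_pos_s4 x hx0 hx1 (m - e + 1) (by omega)).ne'
    have hm1 : etaP x (m - e + 1) = etaP x (m - e) * (1 - x ^ (m - e + 1)) := etaP_succ x _
    rw [hm1]
    field_simp
    ring
  · subst h
    rw [TB_self x hx0 hx1, TB_of_gt x (by omega), Nat.add_sub_cancel, TB_self x hx0 hx1]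
    ring
  · rw [TB_of_gt x (by omega), TB_of_gt x (by omega : m < e), TB_of_gt x (by omega : m < e - 1)]
    ring

lemma SS_succ (x : ℝ) (hx0 : 0 < x) (hx1 : x < 1) (m : ℕ) :
    SS x (m + 1) = SS x m - x ^ (m + 1) * GG x m := by
  have key : ∀ e ∈ Finset.range (m + 1),
      (-1 : ℝ) ^ (e + 1) * x ^ (e + 1) * TB x (m + 1) (e + 1)
        = (-1 : ℝ) ^ (e + 1) * x ^ (e + 1) * TB x m (e + 1)
          + (-(x ^ (m + 1))) * ((-1 : ℝ) ^ e * TB x m e) := by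
    intro e he
    have hem : e ≤ m := Nat.lt_succ_iff.mp (Finset.mem_range.mp he)
    rw [pascal1 x hx0 hx1 m (e + 1) (by omega)]
    have h1 : m + 1 - (e + 1) = m - e := by omega
    have h2 : e + 1 - 1 = e := by omega
    rw [h1, h2]
    have hxp : x ^ (e + 1) * x ^ (m - e) = x ^ (m + 1) := by
      rw [← pow_add]; congr 1; omega
    have hsgn : (-1 : ℝ) ^ (e + 1) = -(-1 : ℝ) ^ e := by rw [pow_succ]; ring
    calc (-1 : ℝ) ^ (e + 1) * x ^ (e + 1) * (TB x m (e + 1) + x ^ (m - e) * TB x m e)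
        = (-1 : ℝ) ^ (e + 1) * x ^ (e + 1) * TB x m (e + 1)
          + (-1 : ℝ) ^ (e + 1) * (x ^ (e + 1) * x ^ (m - e)) * TB x m e := by ring
      _ = _ := by rw [hxp, hsgn]; ring
  have e2 : (∑ e ∈ Finset.range (m + 1 + 1), (-1 : ℝ) ^ e * x ^ e * TB x m e)
      = (∑ e ∈ Finset.range (m + 1), (-1 : ℝ) ^ (e + 1) * x ^ (e + 1) * TB x m (e + 1))
        + (-1 : ℝ) ^ 0 * x ^ 0 * TB x m 0 := by
    rw [Finset.sum_range_succ']
  have e3 : (∑ e ∈ Finset.range (m + 1 + 1), (-1 : ℝ) ^ e * x ^ e * TB x m e) = SS x m := by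
    rw [Finset.sum_range_succ, TB_of_gt x (by omega : m < m + 1)]
    simp [SS]
  have hA : (∑ e ∈ Finset.range (m + 1), (-1 : ℝ) ^ (e + 1) * x ^ (e + 1) * TB x m (e + 1))
      = SS x m - (-1 : ℝ) ^ 0 * x ^ 0 * TB x m 0 := by
    rw [← e3, e2]; ring
  have hsecond : (∑ e ∈ Finset.range (m + 1),
      (-(x ^ (m + 1))) * ((-1 : ℝ) ^ e * TB x m e)) = -(x ^ (m + 1)) * GG x m := by
    rw [← Finset.mul_sum]; rfl
  rw [SS, Finset.sum_range_succ']
  rw [Finset.sum_congr rfl key, Finset.sum_add_distrib, hA, hsecond,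
    TB_zero x hx0 hx1, TB_zero x hx0 hx1]
  ring

lemma GG_succ (x : ℝ) (hx0 : 0 < x) (hx1 : x < 1) (m : ℕ) :
    GG x (m + 1) = SS x m - GG x m := by
  have key : ∀ e ∈ Finset.range (m + 1),
      (-1 : ℝ) ^ (e + 1) * TB x (m + 1) (e + 1)
        = (-1 : ℝ) ^ (e + 1) * x ^ (e + 1) * TB x m (e + 1)
          + (-1 : ℝ) * ((-1 : ℝ) ^ e * TB x m e) := by
    intro e he
    rw [pascal2 x hx0 hx1 m (e + 1) (by omega)]
    have h2 : e + 1 - 1 = e := by omega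
    rw [h2]
    have hsgn : (-1 : ℝ) ^ (e + 1) = -(-1 : ℝ) ^ e := by rw [pow_succ]; ring
    rw [hsgn]; ring
  have e2 : (∑ e ∈ Finset.range (m + 1 + 1), (-1 : ℝ) ^ e * x ^ e * TB x m e)
      = (∑ e ∈ Finset.range (m + 1), (-1 : ℝ) ^ (e + 1) * x ^ (e + 1) * TB x m (e + 1))
        + (-1 : ℝ) ^ 0 * x ^ 0 * TB x m 0 := by
    rw [Finset.sum_range_succ']
  have e3 : (∑ e ∈ Finset.range (m + 1 + 1), (-1 : ℝ) ^ e * x ^ e * TB x m e) = SS x m := by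
    rw [Finset.sum_range_succ, TB_of_gt x (by omega : m < m + 1)]
    simp [SS]
  have hA : (∑ e ∈ Finset.range (m + 1), (-1 : ℝ) ^ (e + 1) * x ^ (e + 1) * TB x m (e + 1))
      = SS x m - (-1 : ℝ) ^ 0 * x ^ 0 * TB x m 0 := by
    rw [← e3, e2]; ring
  have hsecond : (∑ e ∈ Finset.range (m + 1),
      (-1 : ℝ) * ((-1 : ℝ) ^ e * TB x m e)) = -GG x m := by
    rw [← Finset.mul_sum]; simp [GG]
  rw [GG, Finset.sum_range_succ']
  rw [Finset.sum_congr rfl key, Finset.sum_add_distrib, hA, hsecond,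
    TB_zero x hx0 hx1, TB_zero x hx0 hx1]
  ring

lemma main_ind (x : ℝ) (hx0 : 0 < x) (hx1 : x < 1) :
    ∀ m, SS x m = PP x m ∧ GG x m = if Even m then PP x m else 0 := by
  intro m
  induction m with
  | zero =>
    constructor
    · simp [SS, PP, TB_zero x hx0 hx1]
    · simp [GG, PP, TB_zero x hx0 hx1]
  | succ m ih =>
    obtain ⟨hS, hG⟩ := ih
    rcases Nat.even_or_odd m with hm | hm
    · obtain ⟨k, hk⟩ := hm
      have hmk : m = 2 * k := by omega
      have hEv : Even m := ⟨k, hk⟩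
      have hGv : GG x m = PP x m := by simp [hG, hEv]
      have hPsucc : PP x (m + 1) = PP x m * (1 - x ^ (m + 1)) := by
        have h1 : (m + 1 + 1) / 2 = (m + 1) / 2 + 1 := by omega
        have h2 : 2 * ((m + 1) / 2) + 1 = m + 1 := by omega
        rw [PP, h1, Finset.prod_range_succ, h2]; rfl
      constructor
      · rw [SS_succ x hx0 hx1, hS, hGv, hPsucc]; ring
      · rw [GG_succ x hx0 hx1, hS, hGv]
        simp [Nat.even_add_one, hEv]
    · obtain ⟨k, hk⟩ := hm
      have hPsucc : PP x (m + 1) = PP x m := by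
        have h1 : (m + 1 + 1) / 2 = (m + 1) / 2 := by omega
        rw [PP, h1]; rfl
      have hne : ¬ Even m := by simp [hk, parity_simps]
      have hGv : GG x m = 0 := by simp [hG, hne]
      have hEv1 : Even (m + 1) := by simp [Nat.even_add_one, hne]
      constructor
      · rw [SS_succ x hx0 hx1, hS, hGv, hPsucc]; ring
      · rw [GG_succ x hx0 hx1, hS, hGv, hPsucc]
        simp [hEv1]

lemma etaQ_eq_etaP (q : ℝ) (hq : 0 < q) (k : ℕ) : etaQ q k = etaP q⁻¹ k := by
  unfold etaQ etaP
  refine Finset.prod_congr rfl fun i _ => ?_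
  have h1 : (-(i : ℝ) - 1) = -((i + 1 : ℕ) : ℝ) := by push_cast; ring
  rw [h1, Real.rpow_neg hq.le, Real.rpow_natCast, ← inv_pow]

/-- For a prime power `q` and `m ∈ ℕ`,
`Pf_q(0,m) = ∏_{j=1}^{⌈m/2⌉} (1 - q^{-(2j-1)})`. -/
theorem stmt_4 (q : ℕ) (hq : IsPrimePow q) (m : ℕ) :
    Pf (q : ℝ) 0 m
      = ∏ j ∈ Finset.range ((m + 1) / 2), (1 - (q : ℝ) ^ (-(2 * (j : ℝ) + 1))) := by
  have hq2 : 2 ≤ q := hq.two_le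
  have hqR : (1 : ℝ) < (q : ℝ) := by exact_mod_cast (by omega : 1 < q)
  have hq0 : (0 : ℝ) < (q : ℝ) := by linarith
  set x : ℝ := (q : ℝ)⁻¹ with hxdef
  have hx0 : 0 < x := inv_pos.mpr hq0
  have hx1 : x < 1 := inv_lt_one_of_one_lt₀ hqR
  have hPf : Pf (q : ℝ) 0 m = SS x m := by
    unfold Pf SS
    refine Finset.sum_congr rfl fun e he => ?_
    have hem : e ≤ m := Nat.lt_succ_iff.mp (Finset.mem_range.mp he)
    have hrp : (q : ℝ) ^ (-(0 + 1 : ℝ) * (e : ℝ)) = x ^ e := by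
      have h1 : (-(0 + 1 : ℝ) * (e : ℝ)) = -((e : ℕ) : ℝ) := by push_cast; ring
      rw [h1, Real.rpow_neg hq0.le, Real.rpow_natCast, hxdef, ← inv_pow]
    rw [hrp, etaQ_eq_etaP _ hq0, etaQ_eq_etaP _ hq0, etaQ_eq_etaP _ hq0,
      TB, if_pos hem]
    rw [mul_div_assoc]
  rw [hPf, (main_ind x hx0 hx1 m).1, PP]
  refine Finset.prod_congr rfl fun j _ => ?_
  have h1 : (-(2 * (j : ℝ) + 1)) = -((2 * j + 1 : ℕ) : ℝ) := by push_cast; ring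
  rw [h1, Real.rpow_neg hq0.le, Real.rpow_natCast, hxdef, ← inv_pow]
end

section
/- Let q be a prime power and let λ₋₁, λ, φ₋₁, φ, s₁, s₂ be integers with λ₋₁ ≥ λ and φ₋₁ ≥ φ. Assume φ₋₁ − λ₋₁ ≤ s₁ and λ₋₁ − φ₋₁ ≤ s₂. Then: (1) Qf_q(λ₋₁, λ, φ₋₁, φ, s₁, s₂) ≥ 0; and (2) Qf_q(λ₋₁, λ, φ₋₁, φ, s₁, s₂) > 0 if and only if φ − λ ≤ s₁ and λ − φ ≤ s₂. -/
open scoped BigOperators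

/-- `Qf_q(λ₋₁,λ,φ₋₁,φ,s₁,s₂) = ∑_{e=0}^{λ₋₁-λ} ∑_{f=0}^{φ₋₁-φ} (-1)^{e+f} q^{E(e,f)}
/ (η_q(e) η_q(λ₋₁-λ-e) η_q(f) η_q(φ₋₁-φ-f))` where
`E(e,f) = (λ+e)(λ+e-1)/2 - λ(λ-1)/2 - s₁(λ+e) + (φ+f)(φ+f-1)/2 - φ(φ-1)/2 - s₂(φ+f)
+ (λ+e)(φ+f) - (λ+e)² - (φ+f)²`. -/
noncomputable def Qf (q : ℝ) (lm l pm ph s₁ s₂ : ℤ) : ℝ :=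
  ∑ e ∈ Finset.range ((lm - l).toNat + 1), ∑ f ∈ Finset.range ((pm - ph).toNat + 1),
    (-1 : ℝ) ^ (e + f) *
      q ^ (((l : ℝ) + e) * ((l : ℝ) + e - 1) / 2 - (l : ℝ) * ((l : ℝ) - 1) / 2
            - (s₁ : ℝ) * ((l : ℝ) + e)
            + ((ph : ℝ) + f) * ((ph : ℝ) + f - 1) / 2 - (ph : ℝ) * ((ph : ℝ) - 1) / 2
            - (s₂ : ℝ) * ((ph : ℝ) + f)
            + ((l : ℝ) + e) * ((ph : ℝ) + f) - ((l : ℝ) + e) ^ 2 - ((ph : ℝ) + f) ^ 2) /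
      (etaQ q e * etaQ q ((lm - l).toNat - e) * etaQ q f * etaQ q ((pm - ph).toNat - f))

namespace Stmt6

variable {Q : ℝ}

lemma rpow_lt_one' (hQ : 1 < Q) {x : ℝ} (hx : x < 0) : Q ^ x < 1 :=
  Real.rpow_lt_one_of_one_lt_of_neg hQ hx

lemma one_sub_rpow_pos (hQ : 1 < Q) {x : ℝ} (hx : x < 0) : 0 < 1 - Q ^ x := by
  have := rpow_lt_one' hQ hx; linarith

lemma etaQ_pos (hQ : 1 < Q) (k : ℕ) : 0 < etaQ Q k := by
  unfold etaQ
  apply Finset.prod_pos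
  intro i _
  exact one_sub_rpow_pos hQ (by have h := Nat.cast_nonneg (α := ℝ) i; linarith)

lemma etaQ_ne (hQ : 1 < Q) (k : ℕ) : etaQ Q k ≠ 0 := (etaQ_pos hQ k).ne'

lemma etaQ_zero : etaQ Q 0 = 1 := Finset.prod_range_zero _

lemma etaQ_succ (k : ℕ) : etaQ Q (k+1) = etaQ Q k * (1 - Q ^ (-(k:ℝ)-1)) :=
  Finset.prod_range_succ _ _

lemma rpow_split (hQ : 1 < Q) {x y z : ℝ} (h : x = y + z) : Q ^ x = Q ^ y * Q ^ z := by
  rw [h, Real.rpow_add (by linarith : (0:ℝ) < Q)]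

lemma rpow_congr {x y : ℝ} (h : x = y) : Q ^ x = Q ^ y := by rw [h]

/-- one-variable alternating sum -/
noncomputable def SS (Q : ℝ) (m : ℕ) (C : ℝ) : ℝ :=
  ∑ e ∈ Finset.range (m+1),
    (-1:ℝ)^e * Q ^ (-(e:ℝ)*((e:ℝ)+1)/2 - C*(e:ℝ)) / (etaQ Q e * etaQ Q (m-e))

lemma SS_rec (hQ : 1 < Q) (m : ℕ) (C : ℝ) :
    (1 - Q ^ (-(m:ℝ)-1)) * SS Q (m+1) C = (1 - Q ^ (-1-C)) * SS Q m (C+1) := by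
  have hQ0 : (0:ℝ) < Q := by linarith
  have hw0 : (0:ℝ) < 1 - Q ^ (-(m:ℝ)-1) :=
    one_sub_rpow_pos hQ (by have h := Nat.cast_nonneg (α := ℝ) m; linarith)
  have expand : (1 - Q ^ (-(m:ℝ)-1)) * SS Q (m+1) C
      = ∑ e ∈ Finset.range (m+2),
        (1 - Q ^ (-(m:ℝ)-1)) * ((-1:ℝ)^e * Q ^ (-(e:ℝ)*((e:ℝ)+1)/2 - C*(e:ℝ)) /
          (etaQ Q e * etaQ Q (m+1-e))) := by
    rw [SS, Finset.mul_sum]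
  have hU : (1 - Q ^ (-1-C)) * SS Q m (C+1)
      = (∑ e ∈ Finset.range (m+1),
          (-1:ℝ)^e * Q ^ (-(e:ℝ)*((e:ℝ)+1)/2 - (C+1)*(e:ℝ)) / (etaQ Q e * etaQ Q (m-e)))
        + ∑ e ∈ Finset.range (m+1),
          -(Q ^ (-1-C) * ((-1:ℝ)^e * Q ^ (-(e:ℝ)*((e:ℝ)+1)/2 - (C+1)*(e:ℝ)) /
            (etaQ Q e * etaQ Q (m-e)))) := by
    rw [SS, Finset.mul_sum, ← Finset.sum_add_distrib]
    apply Finset.sum_congr rfl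
    intro e _
    ring
  rw [expand, hU]
  rw [Finset.sum_range_succ, Finset.sum_range_succ' (fun e =>
        (1 - Q ^ (-(m:ℝ)-1)) * ((-1:ℝ)^e * Q ^ (-(e:ℝ)*((e:ℝ)+1)/2 - C*(e:ℝ)) /
          (etaQ Q e * etaQ Q (m+1-e)))),
      Finset.sum_range_succ' (fun e =>
        (-1:ℝ)^e * Q ^ (-(e:ℝ)*((e:ℝ)+1)/2 - (C+1)*(e:ℝ)) / (etaQ Q e * etaQ Q (m-e))),
      Finset.sum_range_succ (fun e =>
        -(Q ^ (-1-C) * ((-1:ℝ)^e * Q ^ (-(e:ℝ)*((e:ℝ)+1)/2 - (C+1)*(e:ℝ)) /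
          (etaQ Q e * etaQ Q (m-e)))))]
  have h0 : (1 - Q ^ (-(m:ℝ)-1)) * ((-1:ℝ)^(0:ℕ) *
        Q ^ (-((0:ℕ):ℝ)*(((0:ℕ):ℝ)+1)/2 - C*((0:ℕ):ℝ)) / (etaQ Q 0 * etaQ Q (m+1-0)))
      = (-1:ℝ)^(0:ℕ) * Q ^ (-((0:ℕ):ℝ)*(((0:ℕ):ℝ)+1)/2 - (C+1)*((0:ℕ):ℝ)) /
          (etaQ Q 0 * etaQ Q (m-0)) := by
    have he : (-((0:ℕ):ℝ)*(((0:ℕ):ℝ)+1)/2 - C*((0:ℕ):ℝ)) = 0 := by norm_num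
    have he' : (-((0:ℕ):ℝ)*(((0:ℕ):ℝ)+1)/2 - (C+1)*((0:ℕ):ℝ)) = 0 := by norm_num
    rw [he, he', Real.rpow_zero]
    simp only [Nat.sub_zero, pow_zero, etaQ_zero, etaQ_succ]
    have h1 : etaQ Q m ≠ 0 := etaQ_ne hQ m
    have h2 : (1 - Q ^ (-(m:ℝ)-1)) ≠ 0 := hw0.ne'
    set w := Q ^ (-(m:ℝ)-1) with hwdef
    field_simp
  have hlast : (1 - Q ^ (-(m:ℝ)-1)) * ((-1:ℝ)^(m+1) *
        Q ^ (-((m+1:ℕ):ℝ)*(((m+1:ℕ):ℝ)+1)/2 - C*((m+1:ℕ):ℝ)) /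
        (etaQ Q (m+1) * etaQ Q (m+1-(m+1))))
      = -(Q ^ (-1-C) * ((-1:ℝ)^m *
          Q ^ (-(m:ℝ)*((m:ℝ)+1)/2 - (C+1)*(m:ℝ)) / (etaQ Q m * etaQ Q (m-m)))) := by
    have hsplit : (-((m+1:ℕ):ℝ)*(((m+1:ℕ):ℝ)+1)/2 - C*((m+1:ℕ):ℝ))
        = (-1-C) + (-(m:ℝ)*((m:ℝ)+1)/2 - (C+1)*(m:ℝ)) := by
      push_cast; ring
    rw [rpow_split hQ hsplit]
    simp only [Nat.sub_self, etaQ_zero, etaQ_succ, pow_succ]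
    have h1 : etaQ Q m ≠ 0 := etaQ_ne hQ m
    have h2 : (1 - Q ^ (-(m:ℝ)-1)) ≠ 0 := hw0.ne'
    set w := Q ^ (-(m:ℝ)-1) with hwdef
    set qc := Q ^ (-1-C) with hqcdef
    set qp := Q ^ (-(m:ℝ)*((m:ℝ)+1)/2 - (C+1)*(m:ℝ)) with hqpdef
    field_simp
  have hmid : ∑ e ∈ Finset.range m,
        (1 - Q ^ (-(m:ℝ)-1)) * ((-1:ℝ)^(e+1) *
          Q ^ (-((e+1:ℕ):ℝ)*(((e+1:ℕ):ℝ)+1)/2 - C*((e+1:ℕ):ℝ)) /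
          (etaQ Q (e+1) * etaQ Q (m+1-(e+1))))
      = ∑ e ∈ Finset.range m,
          ((-1:ℝ)^(e+1) * Q ^ (-((e+1:ℕ):ℝ)*(((e+1:ℕ):ℝ)+1)/2 - (C+1)*((e+1:ℕ):ℝ)) /
            (etaQ Q (e+1) * etaQ Q (m-(e+1)))
          + -(Q ^ (-1-C) * ((-1:ℝ)^e * Q ^ (-(e:ℝ)*((e:ℝ)+1)/2 - (C+1)*(e:ℝ)) /
              (etaQ Q e * etaQ Q (m-e))))) := by
    apply Finset.sum_congr rfl
    intro e he
    rw [Finset.mem_range] at he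
    obtain ⟨k, hk⟩ : ∃ k, m = e + k + 1 := ⟨m - e - 1, by omega⟩
    subst hk
    have e1 : e + k + 1 + 1 - (e + 1) = k + 1 := by omega
    have e2 : e + k + 1 - (e + 1) = k := by omega
    have e3 : e + k + 1 - e = k + 1 := by omega
    rw [e1, e2, e3]
    have hwab : Q ^ (-((e+k+1:ℕ):ℝ)-1) = Q ^ (-(e:ℝ)-1) * Q ^ (-(k:ℝ)-1) :=
      rpow_split hQ (by push_cast; ring)
    have hP' : Q ^ (-((e+1:ℕ):ℝ)*(((e+1:ℕ):ℝ)+1)/2 - (C+1)*((e+1:ℕ):ℝ))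
        = Q ^ (-((e+1:ℕ):ℝ)*(((e+1:ℕ):ℝ)+1)/2 - C*((e+1:ℕ):ℝ)) * Q ^ (-(e:ℝ)-1) :=
      rpow_split hQ (by push_cast; ring)
    have hpe : Q ^ (-((e+1:ℕ):ℝ)*(((e+1:ℕ):ℝ)+1)/2 - C*((e+1:ℕ):ℝ))
        = Q ^ (-1-C) * Q ^ (-(e:ℝ)*((e:ℝ)+1)/2 - (C+1)*(e:ℝ)) :=
      rpow_split hQ (by push_cast; ring)
    rw [hwab, hP', hpe]
    rw [etaQ_succ e, etaQ_succ k, pow_succ]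
    have h1 : etaQ Q e ≠ 0 := etaQ_ne hQ e
    have h2 : etaQ Q k ≠ 0 := etaQ_ne hQ k
    have h3 : (1 - Q ^ (-(e:ℝ)-1)) ≠ 0 :=
      (one_sub_rpow_pos hQ (by have := Nat.cast_nonneg (α := ℝ) e; linarith)).ne'
    have h4 : (1 - Q ^ (-(k:ℝ)-1)) ≠ 0 :=
      (one_sub_rpow_pos hQ (by have := Nat.cast_nonneg (α := ℝ) k; linarith)).ne'
    set a := Q ^ (-(e:ℝ)-1) with hadef
    set b := Q ^ (-(k:ℝ)-1) with hbdef
    set qc := Q ^ (-1-C) with hqcdef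
    set qpe := Q ^ (-(e:ℝ)*((e:ℝ)+1)/2 - (C+1)*(e:ℝ)) with hqpedef
    field_simp
    ring
  rw [hmid, Finset.sum_add_distrib]
  linarith [h0, hlast]


lemma SS_prod (hQ : 1 < Q) (m : ℕ) (C : ℝ) :
    SS Q m C = (∏ k ∈ Finset.range m, (1 - Q ^ (-(k:ℝ)-1-C))) / etaQ Q m := by
  induction m generalizing C with
  | zero =>
      simp only [SS, Finset.range_one, Finset.sum_singleton, Finset.range_zero,
        Finset.prod_empty, etaQ_zero]
      norm_num [etaQ_zero]
  | succ m ih =>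
      have hw0 : (0:ℝ) < 1 - Q ^ (-(m:ℝ)-1) :=
        one_sub_rpow_pos hQ (by have h := Nat.cast_nonneg (α := ℝ) m; linarith)
      have key := SS_rec hQ m C
      rw [ih (C+1)] at key
      have hη : etaQ Q (m+1) = etaQ Q m * (1 - Q ^ (-(m:ℝ)-1)) := etaQ_succ m
      have hprod : ∏ k ∈ Finset.range (m+1), (1 - Q ^ (-(k:ℝ)-1-C))
          = (∏ k ∈ Finset.range m, (1 - Q ^ (-(k:ℝ)-1-(C+1)))) * (1 - Q ^ (-1-C)) := by
        rw [Finset.prod_range_succ' (fun k => (1 - Q ^ (-(k:ℝ)-1-C)))]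
        congr 1
        · apply Finset.prod_congr rfl
          intro k _
          apply congrArg (fun x => 1 - Q ^ x)
          push_cast; ring
        · apply congrArg (fun x => 1 - Q ^ x)
          norm_num
      have h1 : etaQ Q m ≠ 0 := etaQ_ne hQ m
      have h2 : (1 - Q ^ (-(m:ℝ)-1)) ≠ 0 := hw0.ne'
      rw [hη, hprod]
      rw [eq_div_iff (mul_ne_zero h1 h2)]
      field_simp at key
      linear_combination key

lemma SS_pos (hQ : 1 < Q) (m : ℕ) {C : ℝ} (hC : 0 ≤ C) : 0 < SS Q m C := by
  rw [SS_prod hQ]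
  apply div_pos _ (etaQ_pos hQ m)
  apply Finset.prod_pos
  intro k _
  exact one_sub_rpow_pos hQ (by have h := Nat.cast_nonneg (α := ℝ) k; linarith)

lemma SS_zero (hQ : 1 < Q) {m : ℕ} {C : ℤ} (h1 : -(m:ℤ) ≤ C) (h2 : C ≤ -1) :
    SS Q m (C:ℝ) = 0 := by
  rw [SS_prod hQ]
  have h3 : (0:ℤ) ≤ -C-1 := by omega
  have hc : ((((-C-1).toNat : ℕ)):ℝ) = -(C:ℝ)-1 := by
    have h4 := Int.toNat_of_nonneg h3
    exact_mod_cast congrArg (fun z : ℤ => (z:ℝ)) h4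
  have hzero : ∏ k ∈ Finset.range m, (1 - Q ^ (-(k:ℝ)-1-(C:ℝ))) = 0 := by
    apply Finset.prod_eq_zero (i := (-C-1).toNat) (by rw [Finset.mem_range]; omega)
    rw [hc, show (-(-(C:ℝ)-1)-1-(C:ℝ)) = 0 by ring, Real.rpow_zero]
    ring
  rw [hzero, zero_div]


/-- two-variable alternating sum -/
noncomputable def Gd (Q : ℝ) (m n : ℕ) (A B : ℝ) : ℝ :=
  ∑ e ∈ Finset.range (m+1), ∑ f ∈ Finset.range (n+1),
    (-1:ℝ)^(e+f) * Q ^ (-(e:ℝ)*((e:ℝ)+1)/2 - (f:ℝ)*((f:ℝ)+1)/2 + (e:ℝ)*(f:ℝ)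
      - A*(e:ℝ) - B*(f:ℝ)) /
      (etaQ Q e * etaQ Q (m-e) * etaQ Q f * etaQ Q (n-f))

lemma Gd_eq (hQ : 1 < Q) (m n : ℕ) (A B : ℝ) :
    Gd Q m n A B = ∑ f ∈ Finset.range (n+1),
      (-1:ℝ)^f * Q ^ (-(f:ℝ)*((f:ℝ)+1)/2 - B*(f:ℝ)) / (etaQ Q f * etaQ Q (n-f))
        * SS Q m (A - (f:ℝ)) := by
  rw [Gd, Finset.sum_comm]
  apply Finset.sum_congr rfl
  intro f _
  rw [SS, Finset.mul_sum]
  apply Finset.sum_congr rfl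
  intro e _
  rw [pow_add]
  rw [rpow_split hQ (show (-(e:ℝ)*((e:ℝ)+1)/2 - (f:ℝ)*((f:ℝ)+1)/2 + (e:ℝ)*(f:ℝ)
      - A*(e:ℝ) - B*(f:ℝ))
    = (-(f:ℝ)*((f:ℝ)+1)/2 - B*(f:ℝ)) + (-(e:ℝ)*((e:ℝ)+1)/2 - (A - (f:ℝ))*(e:ℝ)) by ring)]
  ring

lemma Gd_symm (m n : ℕ) (A B : ℝ) : Gd Q m n A B = Gd Q n m B A := by
  rw [Gd, Gd, Finset.sum_comm]
  apply Finset.sum_congr rfl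
  intro f _
  apply Finset.sum_congr rfl
  intro e _
  rw [add_comm f e,
    rpow_congr (show (-(e:ℝ)*((e:ℝ)+1)/2 - (f:ℝ)*((f:ℝ)+1)/2 + (e:ℝ)*(f:ℝ)
        - A*(e:ℝ) - B*(f:ℝ))
      = (-(f:ℝ)*((f:ℝ)+1)/2 - (e:ℝ)*((e:ℝ)+1)/2 + (f:ℝ)*(e:ℝ) - B*(f:ℝ) - A*(e:ℝ)) by ring)]
  ring

lemma Gd_zero_A (hQ : 1 < Q) {m n : ℕ} {A : ℤ} (B : ℝ)
    (h1 : (n:ℤ) - m ≤ A) (h2 : A ≤ -1) : Gd Q m n (A:ℝ) B = 0 := by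
  rw [Gd_eq hQ]
  apply Finset.sum_eq_zero
  intro f hf
  rw [Finset.mem_range] at hf
  have hcast : ((A:ℝ) - (f:ℝ)) = (((A - (f:ℤ)) : ℤ) : ℝ) := by push_cast; ring
  rw [hcast, SS_zero hQ (by omega) (by omega), mul_zero]

lemma Gd_zero_B (hQ : 1 < Q) {m n : ℕ} (A : ℝ) {B : ℤ}
    (h1 : (m:ℤ) - n ≤ B) (h2 : B ≤ -1) : Gd Q m n A (B:ℝ) = 0 := by
  rw [Gd_symm]
  exact Gd_zero_A hQ A h1 h2

/-- recursion in n, shifting B -/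
lemma recG (hQ : 1 < Q) (m n : ℕ) (A B : ℝ) :
    Gd Q m (n+1) A B = Q ^ (-(n:ℝ)-1) * Gd Q m (n+1) A (B-1) + Gd Q m n A B := by
  have hQ0 : (0:ℝ) < Q := by linarith
  rw [Gd_eq hQ, Gd_eq hQ, Gd_eq hQ, Finset.mul_sum]
  have key : ∑ f ∈ Finset.range (n+1+1),
      ((-1:ℝ)^f * Q ^ (-(f:ℝ)*((f:ℝ)+1)/2 - B*(f:ℝ)) / (etaQ Q f * etaQ Q (n+1-f))
        * SS Q m (A - (f:ℝ))
      - Q ^ (-(n:ℝ)-1) * ((-1:ℝ)^f * Q ^ (-(f:ℝ)*((f:ℝ)+1)/2 - (B-1)*(f:ℝ)) /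
          (etaQ Q f * etaQ Q (n+1-f)) * SS Q m (A - (f:ℝ))))
      = ∑ f ∈ Finset.range (n+1),
        (-1:ℝ)^f * Q ^ (-(f:ℝ)*((f:ℝ)+1)/2 - B*(f:ℝ)) / (etaQ Q f * etaQ Q (n-f))
          * SS Q m (A - (f:ℝ)) := by
    rw [Finset.sum_range_succ]
    have hlast : (-1:ℝ)^(n+1) * Q ^ (-((n+1:ℕ):ℝ)*(((n+1:ℕ):ℝ)+1)/2 - B*((n+1:ℕ):ℝ)) /
          (etaQ Q (n+1) * etaQ Q (n+1-(n+1))) * SS Q m (A - ((n+1:ℕ):ℝ))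
        - Q ^ (-(n:ℝ)-1) * ((-1:ℝ)^(n+1) *
            Q ^ (-((n+1:ℕ):ℝ)*(((n+1:ℕ):ℝ)+1)/2 - (B-1)*((n+1:ℕ):ℝ)) /
          (etaQ Q (n+1) * etaQ Q (n+1-(n+1))) * SS Q m (A - ((n+1:ℕ):ℝ))) = 0 := by
      rw [show Q ^ (-((n+1:ℕ):ℝ)*(((n+1:ℕ):ℝ)+1)/2 - B*((n+1:ℕ):ℝ))
          = Q ^ (-(n:ℝ)-1) * Q ^ (-((n+1:ℕ):ℝ)*(((n+1:ℕ):ℝ)+1)/2 - (B-1)*((n+1:ℕ):ℝ))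
        from rpow_split hQ (by push_cast; ring)]
      ring
    rw [hlast, add_zero]
    apply Finset.sum_congr rfl
    intro f hf
    rw [Finset.mem_range] at hf
    obtain ⟨k, hk⟩ : ∃ k, n = f + k := ⟨n - f, by omega⟩
    subst hk
    have e1 : f + k + 1 - f = k + 1 := by omega
    have e2 : f + k - f = k := by omega
    rw [e1, e2, etaQ_succ k]
    rw [show Q ^ (-(f:ℝ)*((f:ℝ)+1)/2 - (B-1)*(f:ℝ))
        = Q ^ (-(f:ℝ)*((f:ℝ)+1)/2 - B*(f:ℝ)) * Q ^ ((f:ℝ)) from rpow_split hQ (by ring)]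
    rw [show Q ^ (-((f+k:ℕ):ℝ)-1) = Q ^ (-(k:ℝ)-1) * Q ^ (-((f:ℝ))) from
      rpow_split hQ (by push_cast; ring)]
    have hf0 : Q ^ ((f:ℝ)) * Q ^ (-((f:ℝ))) = 1 := by
      rw [← Real.rpow_add hQ0]; norm_num
    have h1 : etaQ Q f ≠ 0 := etaQ_ne hQ f
    have h2 : etaQ Q k ≠ 0 := etaQ_ne hQ k
    have h3 : (1 - Q ^ (-(k:ℝ)-1)) ≠ 0 :=
      (one_sub_rpow_pos hQ (by have := Nat.cast_nonneg (α := ℝ) k; linarith)).ne'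
    set a := Q ^ (-(k:ℝ)-1) with hadef
    set u := Q ^ ((f:ℝ)) with hudef
    set v := Q ^ (-((f:ℝ))) with hvdef
    set qq := Q ^ (-(f:ℝ)*((f:ℝ)+1)/2 - B*(f:ℝ)) with hqqdef
    field_simp
    linear_combination (-(qq * SS Q m (A - (f:ℝ)) * a)) * hf0
  rw [← key, Finset.sum_sub_distrib]
  ring


/-- recursion in m, shifting A -/
lemma recI (hQ : 1 < Q) (m n : ℕ) (A B : ℝ) :
    (1 - Q ^ (-(m:ℝ)-1)) * Gd Q (m+1) n A B
      = Gd Q m n (A+1) B - Q ^ (-A-1) * Gd Q m n (A+1) (B-1) := by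
  rw [Gd_eq hQ, Gd_eq hQ, Gd_eq hQ, Finset.mul_sum, Finset.mul_sum,
    ← Finset.sum_sub_distrib]
  apply Finset.sum_congr rfl
  intro f hf
  have hrec := SS_rec hQ m (A - (f:ℝ))
  have harg : A - (f:ℝ) + 1 = A + 1 - (f:ℝ) := by ring
  rw [harg] at hrec
  have hsplit : Q ^ (-1-(A - (f:ℝ))) = Q ^ (-A-1) * Q ^ ((f:ℝ)) :=
    rpow_split hQ (by ring)
  have hw : Q ^ (-(f:ℝ)*((f:ℝ)+1)/2 - (B-1)*(f:ℝ))
      = Q ^ (-(f:ℝ)*((f:ℝ)+1)/2 - B*(f:ℝ)) * Q ^ ((f:ℝ)) := rpow_split hQ (by ring)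
  rw [hw]
  linear_combination
    ((-1:ℝ)^f * Q ^ (-(f:ℝ)*((f:ℝ)+1)/2 - B*(f:ℝ)) / (etaQ Q f * etaQ Q (n-f))) * hrec
    - ((-1:ℝ)^f * Q ^ (-(f:ℝ)*((f:ℝ)+1)/2 - B*(f:ℝ)) / (etaQ Q f * etaQ Q (n-f)))
        * SS Q m (A + 1 - (f:ℝ)) * hsplit


lemma Gd_n0 (hQ : 1 < Q) (m : ℕ) (A B : ℝ) : Gd Q m 0 A B = SS Q m A := by
  rw [Gd_eq hQ]
  rw [Finset.sum_range_one]
  norm_num [etaQ_zero]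

lemma Gd_pos (hQ : 1 < Q) :
    ∀ N K (m n : ℕ) (A B : ℤ), m + n = N → (A + B).toNat = K →
      0 ≤ A → (n:ℤ) - m ≤ A → 0 ≤ B → (m:ℤ) - n ≤ B →
      0 < Gd Q m n (A:ℝ) (B:ℝ) := by
  intro N
  induction N using Nat.strong_induction_on with
  | _ N ihN =>
  intro K
  induction K using Nat.strong_induction_on with
  | _ K ihK =>
  intro m n A B hN hK hA0 hA1 hB0 hB1
  by_cases hn : n = 0
  · subst hn
    rw [Gd_n0 hQ]
    exact SS_pos hQ m (by exact_mod_cast hA0)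
  by_cases hm : m = 0
  · subst hm
    rw [Gd_symm, Gd_n0 hQ]
    exact SS_pos hQ n (by exact_mod_cast hB0)
  obtain ⟨m', rfl⟩ : ∃ m', m = m'+1 := ⟨m-1, by omega⟩
  obtain ⟨n', rfl⟩ : ∃ n', n = n'+1 := ⟨n-1, by omega⟩
  by_cases hB : ((m':ℤ)+1) - ((n':ℤ)+1) + 1 ≤ B ∧ 1 ≤ B
  · have hrec := recG hQ (m'+1) n' (A:ℝ) (B:ℝ)
    have hc : ((B:ℝ) - 1) = ((B-1:ℤ):ℝ) := by push_cast; ring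
    rw [hc] at hrec
    rw [hrec]
    have T1 : 0 < Gd Q (m'+1) (n'+1) (A:ℝ) ((B-1:ℤ):ℝ) :=
      ihK ((A + (B-1)).toNat) (by omega) (m'+1) (n'+1) A (B-1) hN rfl
        hA0 hA1 (by omega) (by omega)
    have T2 : 0 < Gd Q (m'+1) n' (A:ℝ) (B:ℝ) :=
      ihN (m'+1+n') (by omega) ((A+B).toNat) (m'+1) n' A B rfl rfl
        hA0 (by omega) hB0 (by omega)
    have hq : (0:ℝ) < Q ^ (-(n':ℝ)-1) := Real.rpow_pos_of_pos (by linarith) _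
    have := mul_pos hq T1
    linarith
  by_cases hA : ((n':ℤ)+1) - ((m':ℤ)+1) + 1 ≤ A ∧ 1 ≤ A
  · rw [Gd_symm]
    have hrec := recG hQ (n'+1) m' (B:ℝ) (A:ℝ)
    have hc : ((A:ℝ) - 1) = ((A-1:ℤ):ℝ) := by push_cast; ring
    rw [hc] at hrec
    rw [hrec]
    have T1 : 0 < Gd Q (n'+1) (m'+1) (B:ℝ) ((A-1:ℤ):ℝ) := by
      rw [Gd_symm]
      exact ihK ((A-1+B).toNat) (by omega) (m'+1) (n'+1) (A-1) B hN rfl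
        (by omega) (by omega) hB0 hB1
    have T2 : 0 < Gd Q (n'+1) m' (B:ℝ) (A:ℝ) := by
      rw [Gd_symm]
      exact ihN (m'+(n'+1)) (by omega) ((A+B).toNat) m' (n'+1) A B rfl rfl
        hA0 (by omega) hB0 (by omega)
    have hq : (0:ℝ) < Q ^ (-(m':ℝ)-1) := Real.rpow_pos_of_pos (by linarith) _
    have := mul_pos hq T1
    linarith
  by_cases hmn : m' ≤ n'
  · have hrec := recI hQ m' (n'+1) (A:ℝ) (B:ℝ)
    have hc1 : ((A:ℝ) + 1) = ((A+1:ℤ):ℝ) := by push_cast; ring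
    have hc2 : ((B:ℝ) - 1) = ((B-1:ℤ):ℝ) := by push_cast; ring
    rw [hc1, hc2] at hrec
    have hvan : Gd Q m' (n'+1) ((A+1:ℤ):ℝ) ((B-1:ℤ):ℝ) = 0 :=
      Gd_zero_B hQ _ (by omega) (by omega)
    rw [hvan, mul_zero, sub_zero] at hrec
    have T1 : 0 < Gd Q m' (n'+1) ((A+1:ℤ):ℝ) (B:ℝ) :=
      ihN (m'+(n'+1)) (by omega) ((A+1+B).toNat) m' (n'+1) (A+1) B rfl rfl
        (by omega) (by omega) hB0 (by omega)
    have hw0 : (0:ℝ) < 1 - Q ^ (-(m':ℝ)-1) :=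
      one_sub_rpow_pos hQ (by have := Nat.cast_nonneg (α := ℝ) m'; linarith)
    have hpos : 0 < (1 - Q ^ (-(m':ℝ)-1)) * Gd Q (m'+1) (n'+1) (A:ℝ) (B:ℝ) := by
      rw [hrec]; exact T1
    rcases mul_pos_iff.mp hpos with ⟨_, h⟩ | ⟨h, _⟩
    · exact h
    · linarith
  · rw [Gd_symm]
    have hrec := recI hQ n' (m'+1) (B:ℝ) (A:ℝ)
    have hc1 : ((B:ℝ) + 1) = ((B+1:ℤ):ℝ) := by push_cast; ring
    have hc2 : ((A:ℝ) - 1) = ((A-1:ℤ):ℝ) := by push_cast; ring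
    rw [hc1, hc2] at hrec
    have hvan : Gd Q n' (m'+1) ((B+1:ℤ):ℝ) ((A-1:ℤ):ℝ) = 0 :=
      Gd_zero_B hQ _ (by omega) (by omega)
    rw [hvan, mul_zero, sub_zero] at hrec
    have T1 : 0 < Gd Q n' (m'+1) ((B+1:ℤ):ℝ) (A:ℝ) := by
      rw [Gd_symm]
      exact ihN (m'+1+n') (by omega) ((A+(B+1)).toNat) (m'+1) n' A (B+1) rfl rfl
        hA0 (by omega) (by omega) (by omega)
    have hw0 : (0:ℝ) < 1 - Q ^ (-(n':ℝ)-1) :=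
      one_sub_rpow_pos hQ (by have := Nat.cast_nonneg (α := ℝ) n'; linarith)
    have hpos : 0 < (1 - Q ^ (-(n':ℝ)-1)) * Gd Q (n'+1) (m'+1) (B:ℝ) (A:ℝ) := by
      rw [hrec]; exact T1
    rcases mul_pos_iff.mp hpos with ⟨_, h⟩ | ⟨h, _⟩
    · exact h
    · linarith

lemma Gd_main (hQ : 1 < Q) (m n : ℕ) (A B : ℤ)
    (h1 : (n:ℤ) - m ≤ A) (h2 : (m:ℤ) - n ≤ B) :
    0 ≤ Gd Q m n (A:ℝ) (B:ℝ) ∧ (0 < Gd Q m n (A:ℝ) (B:ℝ) ↔ 0 ≤ A ∧ 0 ≤ B) := by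
  by_cases hc : 0 ≤ A ∧ 0 ≤ B
  · have := Gd_pos hQ (m+n) ((A+B).toNat) m n A B rfl rfl hc.1 h1 hc.2 h2
    exact ⟨this.le, by simp [this, hc]⟩
  · have hz : Gd Q m n (A:ℝ) (B:ℝ) = 0 := by
      rcases not_and_or.mp hc with h | h
      · exact Gd_zero_A hQ _ h1 (by omega)
      · exact Gd_zero_B hQ _ h2 (by omega)
    rw [hz]
    exact ⟨le_refl 0, by simp [hc, lt_irrefl]⟩


lemma Qf_eq (hQ : 1 < Q) (lm l pm ph s₁ s₂ : ℤ) :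
    Qf Q lm l pm ph s₁ s₂
      = Q ^ (-(s₁:ℝ)*(l:ℝ) - (s₂:ℝ)*(ph:ℝ) + (l:ℝ)*(ph:ℝ) - (l:ℝ)^2 - (ph:ℝ)^2) *
        Gd Q ((lm-l).toNat) ((pm-ph).toNat) (((s₁+l-ph : ℤ)):ℝ) (((s₂+ph-l : ℤ)):ℝ) := by
  rw [Qf, Gd, Finset.mul_sum]
  apply Finset.sum_congr rfl
  intro e _
  rw [Finset.mul_sum]
  apply Finset.sum_congr rfl
  intro f _
  rw [rpow_split hQ (show
      ((l : ℝ) + e) * ((l : ℝ) + e - 1) / 2 - (l : ℝ) * ((l : ℝ) - 1) / 2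
        - (s₁ : ℝ) * ((l : ℝ) + e)
        + ((ph : ℝ) + f) * ((ph : ℝ) + f - 1) / 2 - (ph : ℝ) * ((ph : ℝ) - 1) / 2
        - (s₂ : ℝ) * ((ph : ℝ) + f)
        + ((l : ℝ) + e) * ((ph : ℝ) + f) - ((l : ℝ) + e) ^ 2 - ((ph : ℝ) + f) ^ 2
      = (-(s₁:ℝ)*(l:ℝ) - (s₂:ℝ)*(ph:ℝ) + (l:ℝ)*(ph:ℝ) - (l:ℝ)^2 - (ph:ℝ)^2)
        + (-(e:ℝ)*((e:ℝ)+1)/2 - (f:ℝ)*((f:ℝ)+1)/2 + (e:ℝ)*(f:ℝ)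
            - (((s₁+l-ph : ℤ)):ℝ)*(e:ℝ) - (((s₂+ph-l : ℤ)):ℝ)*(f:ℝ)) by push_cast; ring)]
  ring

end Stmt6

/-- Let `q` be a prime power and `λ₋₁ ≥ λ`, `φ₋₁ ≥ φ`, `s₁`, `s₂` integers with
`φ₋₁ - λ₋₁ ≤ s₁` and `λ₋₁ - φ₋₁ ≤ s₂`.  Then `Qf_q(λ₋₁,λ,φ₋₁,φ,s₁,s₂) ≥ 0`, with
equality to a positive number exactly when `φ - λ ≤ s₁` and `λ - φ ≤ s₂`. -/
theorem stmt_6 (q : ℕ) (hq : IsPrimePow q) (lm l pm ph s₁ s₂ : ℤ)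
    (hl : l ≤ lm) (hp : ph ≤ pm) (h₁ : pm - lm ≤ s₁) (h₂ : lm - pm ≤ s₂) :
    0 ≤ Qf (q : ℝ) lm l pm ph s₁ s₂ ∧
    (0 < Qf (q : ℝ) lm l pm ph s₁ s₂ ↔ ph - l ≤ s₁ ∧ l - ph ≤ s₂) := by
  have h2q : 2 ≤ q := hq.two_le
  have hQ : (1:ℝ) < (q:ℝ) := by exact_mod_cast Nat.lt_of_lt_of_le one_lt_two h2q
  have hm : (((lm - l).toNat : ℕ) : ℤ) = lm - l := Int.toNat_of_nonneg (by omega)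
  have hn : (((pm - ph).toNat : ℕ) : ℤ) = pm - ph := Int.toNat_of_nonneg (by omega)
  have key := Stmt6.Gd_main hQ ((lm - l).toNat) ((pm - ph).toNat)
    (s₁ + l - ph) (s₂ + ph - l) (by omega) (by omega)
  have htrans := Stmt6.Qf_eq hQ lm l pm ph s₁ s₂
  have hqpos : (0:ℝ) < (q:ℝ) ^ (-(s₁:ℝ)*(l:ℝ) - (s₂:ℝ)*(ph:ℝ) + (l:ℝ)*(ph:ℝ)
      - (l:ℝ)^2 - (ph:ℝ)^2) := Real.rpow_pos_of_pos (by linarith) _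
  constructor
  · rw [htrans]
    exact mul_nonneg hqpos.le key.1
  · rw [htrans]
    constructor
    · intro h
      have hg : 0 < Stmt6.Gd (q:ℝ) ((lm-l).toNat) ((pm-ph).toNat)
          (((s₁+l-ph : ℤ)):ℝ) (((s₂+ph-l : ℤ)):ℝ) := by
        rcases mul_pos_iff.mp h with ⟨_, hh⟩ | ⟨hh, _⟩
        · exact hh
        · linarith
      have := key.2.mp hg
      omega
    · rintro ⟨ha, hb⟩
      exact mul_pos hqpos (key.2.mpr ⟨by omega, by omega⟩)
end

section
/- Let q be a prime power, let s₁, s₂ ≥ 0 be integers and r ≥ 1 an integer, and for partitions λ, φ let ν(λ,φ) be as defined in the context. Then ν(λ,φ) ≥ 0 for all partitions λ, φ, and ν(λ,φ) > 0 if and only if −s₁ ≤ λ_j − φ_j ≤ s₂ for all 1 ≤ j ≤ r. -/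
open scoped BigOperators

/-- `η_q` at an integer argument (only meaningful for nonnegative arguments). -/
noncomputable def etaZ (q : ℝ) (k : ℤ) : ℝ := etaQ q k.toNat

/-- `η_q(∞) = ∏_{i=1}^{∞} (1 - q^{-i})`. -/
noncomputable def etaInf (q : ℝ) : ℝ := ∏' i : ℕ, (1 - q ^ (-(i : ℝ) - 1))

/-- `Q̄f_q(λ₋₁,λ,φ₋₁,φ,s₁,s₂) = q^{λ²+s₁λ+φ²+s₂φ-λφ} η_q(λ₋₁-λ) η_q(φ₋₁-φ)
⬝ Qf_q(λ₋₁,λ,φ₋₁,φ,s₁,s₂)`. -/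
noncomputable def Qbar (q : ℝ) (lm l pm ph s₁ s₂ : ℤ) : ℝ :=
  q ^ ((l : ℝ) ^ 2 + (s₁ : ℝ) * (l : ℝ) + (ph : ℝ) ^ 2 + (s₂ : ℝ) * (ph : ℝ)
        - (l : ℝ) * (ph : ℝ)) *
    etaQ q (lm - l).toNat * etaQ q (pm - ph).toNat * Qf q lm l pm ph s₁ s₂

/-- A partition, encoded as a weakly decreasing eventually-zero sequence `l : ℕ → ℕ`;
`l i` is the part `λ_{i+1}` (`0`-based indexing). -/
def PartitionSeq : Type :=
  {l : ℕ → ℕ // (∀ i, l (i + 1) ≤ l i) ∧ ∃ N, ∀ i, N ≤ i → l i = 0}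

/-- The measure `ν(λ,φ)` (`0`-based: `l j = λ_{j+1}`, `ph j = φ_{j+1}`). -/
noncomputable def nuDP (q : ℝ) (s₁ s₂ : ℤ) (r : ℕ) (l ph : ℕ → ℕ) : ℝ :=
  if s₂ < (l 0 : ℤ) - (ph 0 : ℤ) ∨ s₁ < (ph 0 : ℤ) - (l 0 : ℤ) then 0
  else
    q ^ ((∑ j ∈ Finset.range r, (l j : ℝ) * (ph j : ℝ))
          + ∑' j : ℕ, (-(l j : ℝ) ^ 2 - (s₁ : ℝ) * (l j : ℝ)
              - (ph j : ℝ) ^ 2 - (s₂ : ℝ) * (ph j : ℝ)))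
      / (∏' j : ℕ, (etaQ q (l j - l (j + 1)) * etaQ q (ph j - ph (j + 1))))
      * (etaInf q * etaZ q (s₁ + s₂) /
          (etaZ q (s₂ - (l 0 : ℤ) + (ph 0 : ℤ)) * etaZ q (s₁ + (l 0 : ℤ) - (ph 0 : ℤ))))
      * (∏ j ∈ Finset.range (r - 1),
          Qbar q (l j : ℤ) (l (j + 1) : ℤ) (ph j : ℤ) (ph (j + 1) : ℤ) s₁ s₂)
      * (∏ i ∈ Finset.range (l (r - 1)), (1 - q ^ (-(s₁ : ℝ) - ((i : ℝ) + 1))))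
      * (∏ i ∈ Finset.range (ph (r - 1)), (1 - q ^ (-(s₂ : ℝ) - ((i : ℝ) + 1))))

namespace Stmt9
variable {q : ℝ}

lemma etaQ_factor (hq : 0 < q) (i : ℕ) : q ^ (-(i:ℝ) - 1) = q⁻¹ ^ (i+1) := by
  rw [show -(i:ℝ) - 1 = -(((i+1 : ℕ) : ℝ)) by push_cast; ring, Real.rpow_neg hq.le,
    Real.rpow_natCast, inv_pow]

lemma etaQ_eq (hq : 0 < q) (k : ℕ) :
    etaQ q k = ∏ i ∈ Finset.range k, (1 - q⁻¹ ^ (i+1)) :=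
  Finset.prod_congr rfl fun i _ => by rw [etaQ_factor hq]

lemma etaQ_zero : etaQ q 0 = 1 := by simp [etaQ]

lemma etaQ_succ (hq : 0 < q) (k : ℕ) : etaQ q (k+1) = etaQ q k * (1 - q⁻¹ ^ (k+1)) := by
  rw [etaQ_eq hq, etaQ_eq hq, Finset.prod_range_succ]

lemma inv_lt_one' (hq : 1 < q) : q⁻¹ < 1 := by
  rw [inv_lt_one_iff₀]; right; exact hq

lemma pow_inv_lt_one (hq : 1 < q) (k : ℕ) (hk : k ≠ 0) : q⁻¹ ^ k < 1 :=
  pow_lt_one₀ (by positivity) (inv_lt_one' hq) hk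

lemma one_sub_pow_pos (hq : 1 < q) (k : ℕ) (hk : k ≠ 0) : 0 < 1 - q⁻¹ ^ k := by
  have := pow_inv_lt_one hq k hk; linarith

lemma etaQ_pos (hq : 1 < q) (k : ℕ) : 0 < etaQ q k := by
  rw [etaQ_eq (by linarith)]
  exact Finset.prod_pos fun i _ => one_sub_pow_pos hq _ (Nat.succ_ne_zero i)

noncomputable def qb (q : ℝ) (a e : ℕ) : ℝ := etaQ q a / (etaQ q e * etaQ q (a - e))

lemma qb_pos (hq : 1 < q) (a e : ℕ) : 0 < qb q a e :=
  div_pos (etaQ_pos hq _) (mul_pos (etaQ_pos hq _) (etaQ_pos hq _))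

lemma qb_zero (hq : 1 < q) (a : ℕ) : qb q a 0 = 1 := by
  rw [qb, etaQ_zero, Nat.sub_zero, one_mul, div_self (etaQ_pos hq a).ne']

lemma qb_diag (hq : 1 < q) (a : ℕ) : qb q a a = 1 := by
  rw [qb, Nat.sub_self, etaQ_zero, mul_one, div_self (etaQ_pos hq a).ne']

lemma qb_pascal (hq : 1 < q) {a e : ℕ} (h : e < a) :
    qb q (a+1) (e+1) = q⁻¹ ^ (e+1) * qb q a (e+1) + qb q a e := by
  have h0 : (0:ℝ) < q := by linarith
  have h1 : a + 1 - (e+1) = (a - (e+1)) + 1 := by omega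
  have h2 : a - e = (a - (e+1)) + 1 := by omega
  have h3 : a - (e+1) + 1 = a - e := by omega
  have hee : (1:ℝ) - q⁻¹ ^ (e+1) ≠ 0 := (one_sub_pow_pos hq _ (Nat.succ_ne_zero e)).ne'
  have hff : (1:ℝ) - q⁻¹ ^ (a - (e+1) + 1) ≠ 0 := (one_sub_pow_pos hq _ (Nat.succ_ne_zero _)).ne'
  have hne : ∀ k, etaQ q k ≠ 0 := fun k => (etaQ_pos hq k).ne'
  have hpow : q⁻¹ ^ (e+1) * q⁻¹ ^ (a - (e+1) + 1) = q⁻¹ ^ (a+1) := by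
    rw [← pow_add]; congr 1; omega
  rw [qb, qb, qb, h1, h2, etaQ_succ h0 a, etaQ_succ h0 e, etaQ_succ h0 (a - (e+1)), h3]
  rw [h3] at hff hpow
  have hA := hne a; have hE := hne e; have hF := hne (a - (e+1))
  generalize etaQ q a = A at *
  generalize etaQ q e = E at *
  generalize etaQ q (a - (e+1)) = F at *
  generalize q⁻¹ ^ (e+1) = u at *
  generalize q⁻¹ ^ (a - e) = v at *
  generalize q⁻¹ ^ (a+1) = w at *
  field_simp
  rw [← hpow]
  ring


lemma qbinom_thm (hq : 1 < q) (a : ℕ) : ∀ z : ℝ,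
    ∏ i ∈ Finset.range a, (1 - z * q⁻¹ ^ i) =
      ∑ e ∈ Finset.range (a+1), (-1:ℝ)^e * qb q a e * q⁻¹ ^ (e*(e-1)/2) * z ^ e := by
  induction a with
  | zero => intro z; simp [qb_zero hq]
  | succ a ih =>
    intro z
    have hsplit : ∏ i ∈ Finset.range (a+1), (1 - z * q⁻¹ ^ i)
        = (1 - z) * ∏ i ∈ Finset.range a, (1 - (z * q⁻¹) * q⁻¹ ^ i) := by
      rw [Finset.prod_range_succ']
      simp only [pow_zero, mul_one, pow_succ]
      rw [mul_comm]
      congr 1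
      exact Finset.prod_congr rfl fun i _ => by ring
    rw [hsplit, ih (z * q⁻¹)]
    -- expand
    have expand : (1 - z) * ∑ e ∈ Finset.range (a+1),
          (-1:ℝ)^e * qb q a e * q⁻¹ ^ (e*(e-1)/2) * (z * q⁻¹) ^ e
        = (∑ e ∈ Finset.range (a+1), (-1:ℝ)^e * qb q a e * q⁻¹ ^ (e*(e-1)/2) * q⁻¹ ^ e * z ^ e)
          - ∑ e ∈ Finset.range (a+1), (-1:ℝ)^e * qb q a e * q⁻¹ ^ (e*(e-1)/2) * q⁻¹ ^ e * z ^ (e+1) := by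
      rw [sub_mul, one_mul, Finset.mul_sum, ← Finset.sum_sub_distrib, ← Finset.sum_sub_distrib]
      exact Finset.sum_congr rfl fun e _ => by rw [mul_pow]; ring
    rw [expand]
    -- now prove target equality
    rw [Finset.sum_range_succ (n := a+1), Finset.sum_range_succ'
        (f := fun e => (-1:ℝ)^e * qb q (a+1) e * q⁻¹ ^ (e*(e-1)/2) * z ^ e),
      Finset.sum_range_succ' (f := fun e => (-1:ℝ)^e * qb q a e * q⁻¹ ^ (e*(e-1)/2) * q⁻¹ ^ e * z ^ e),
      Finset.sum_range_succ (f := fun e => (-1:ℝ)^e * qb q a e * q⁻¹ ^ (e*(e-1)/2) * q⁻¹ ^ e * z ^ (e+1))]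
    have hbot : ((-1:ℝ))^0 * qb q (a+1) 0 * q⁻¹ ^ (0*(0-1)/2) * z ^ 0
        = ((-1:ℝ))^0 * qb q a 0 * q⁻¹ ^ (0*(0-1)/2) * q⁻¹ ^ 0 * z ^ 0 := by
      simp [qb_zero hq]
    have htop : ((-1:ℝ))^(a+1) * qb q (a+1) (a+1) * q⁻¹ ^ ((a+1)*(a+1-1)/2) * z ^ (a+1)
        = -(((-1:ℝ))^a * qb q a a * q⁻¹ ^ (a*(a-1)/2) * q⁻¹ ^ a * z ^ (a+1)) := by
      rw [qb_diag hq, qb_diag hq]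
      have : (a+1)*(a+1-1)/2 = a*(a-1)/2 + a := by
        simpa using Nat.triangle_succ a
      rw [this]
      ring
    have hmid : ∀ e ∈ Finset.range a,
        ((-1:ℝ))^(e+1) * qb q (a+1) (e+1) * q⁻¹ ^ ((e+1)*((e+1)-1)/2) * z ^ (e+1)
        = ((-1:ℝ))^(e+1) * qb q a (e+1) * q⁻¹ ^ ((e+1)*((e+1)-1)/2) * q⁻¹ ^ (e+1) * z ^ (e+1)
          - ((-1:ℝ))^e * qb q a e * q⁻¹ ^ (e*(e-1)/2) * q⁻¹ ^ e * z ^ (e+1) := by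
      intro e he
      rw [qb_pascal hq (Finset.mem_range.mp he)]
      have : (e+1)*((e+1)-1)/2 = e*(e-1)/2 + e := by
        simpa using Nat.triangle_succ e
      rw [this]
      ring
    rw [Finset.sum_congr rfl hmid, Finset.sum_sub_distrib]
    rw [hbot, htop]
    ring

def tri (e : ℕ) : ℤ := ((e*(e+1)/2 : ℕ) : ℤ)

lemma tri_nat (e : ℕ) : e*(e+1)/2 = e*(e-1)/2 + e := by
  rw [mul_comm]; exact Nat.triangle_succ e

lemma tri_eq (e : ℕ) : tri e = ((e*(e-1)/2 : ℕ) : ℤ) + e := by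
  rw [tri, tri_nat]; push_cast; ring

lemma tri_succ (e : ℕ) : tri (e+1) = tri e + (e+1) := by
  have h : (e+1+1)*(e+1)/2 = (e+1)*e/2 + (e+1) := Nat.triangle_succ (e+1)
  rw [tri, tri, mul_comm (e+1) (e+1+1), h, mul_comm (e+1) e]
  push_cast; ring

lemma tri_cast (e : ℕ) : ((tri e : ℤ) : ℝ) = (e:ℝ)*((e:ℝ)+1)/2 := by
  have h : (e*(e+1)/2) * 2 = e*(e+1) := Nat.div_mul_cancel (Nat.even_mul_succ_self e).two_dvd
  rw [tri]
  have := congrArg (fun n : ℕ => ((n : ℤ) : ℝ)) h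
  push_cast at this ⊢
  linarith

noncomputable def Pf (q : ℝ) (a : ℕ) (α : ℤ) (f : ℕ) : ℝ :=
  ∏ i ∈ Finset.range a, (1 - q ^ ((f:ℤ) - 1 - α - i))

lemma collapse (hq : 1 < q) (a : ℕ) (α : ℤ) (f : ℕ) :
    ∑ e ∈ Finset.range (a+1), (-1:ℝ)^e * qb q a e * q ^ ((e:ℤ)*(f:ℤ) - α*e - tri e)
      = Pf q a α f := by
  have h0 : (0:ℝ) < q := by linarith
  have hqne : q ≠ 0 := h0.ne'
  have hb := qbinom_thm hq a (q ^ ((f:ℤ) - 1 - α))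
  have hL : ∏ i ∈ Finset.range a, (1 - q ^ ((f:ℤ) - 1 - α) * q⁻¹ ^ i) = Pf q a α f := by
    refine Finset.prod_congr rfl fun i _ => ?_
    have h : ((f:ℤ) - 1 - α - i) = ((f:ℤ) - 1 - α) + (-(i:ℤ)) := by ring
    rw [h, zpow_add₀ hqne, zpow_neg, zpow_natCast, ← inv_pow]
  calc ∑ e ∈ Finset.range (a+1), (-1:ℝ)^e * qb q a e * q ^ ((e:ℤ)*(f:ℤ) - α*e - tri e)
      = ∑ e ∈ Finset.range (a+1),
          (-1:ℝ)^e * qb q a e * q⁻¹ ^ (e*(e-1)/2) * (q ^ ((f:ℤ) - 1 - α)) ^ e := by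
        refine Finset.sum_congr rfl fun e _ => ?_
        have key : q⁻¹ ^ (e*(e-1)/2) * (q ^ ((f:ℤ) - 1 - α)) ^ e
            = q ^ ((e:ℤ)*(f:ℤ) - α*e - tri e) := by
          rw [inv_pow, ← zpow_natCast q (e*(e-1)/2), ← zpow_neg,
            ← zpow_natCast (q ^ ((f:ℤ) - 1 - α)) e, ← zpow_mul, ← zpow_add₀ hqne]
          congr 1
          rw [tri_eq]
          push_cast
          ring
        rw [← key]; ring
    _ = Pf q a α f := by rw [← hb, hL]

lemma Qbar_repr (hq : 1 < q) (lm l pm ph s₁ s₂ : ℤ) :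
    Qbar q lm l pm ph s₁ s₂ =
      ∑ f ∈ Finset.range ((pm-ph).toNat + 1), (-1:ℝ)^f *
        (qb q (pm-ph).toNat f * q ^ (-(tri f) - (s₂+ph-l)*(f:ℤ)) *
          Pf q (lm-l).toNat (s₁+l-ph) f) := by
  have h0 : (0:ℝ) < q := by linarith
  have hqne : q ≠ 0 := h0.ne'
  have hne : ∀ k, etaQ q k ≠ 0 := fun k => (etaQ_pos hq k).ne'
  rw [Qbar, Qf]
  simp only [Finset.mul_sum]
  rw [Finset.sum_comm (s := Finset.range ((lm - l).toNat + 1)) (t := Finset.range ((pm - ph).toNat + 1))]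
  refine Finset.sum_congr rfl fun f hf => ?_
  rw [← collapse hq ((lm-l).toNat) (s₁+l-ph) f]
  simp only [Finset.mul_sum]
  refine Finset.sum_congr rfl fun e he => ?_
  have key : q ^ ((l : ℝ) ^ 2 + (s₁ : ℝ) * (l : ℝ) + (ph : ℝ) ^ 2 + (s₂ : ℝ) * (ph : ℝ)
        - (l : ℝ) * (ph : ℝ)) *
      q ^ (((l : ℝ) + e) * ((l : ℝ) + e - 1) / 2 - (l : ℝ) * ((l : ℝ) - 1) / 2
            - (s₁ : ℝ) * ((l : ℝ) + e)
            + ((ph : ℝ) + f) * ((ph : ℝ) + f - 1) / 2 - (ph : ℝ) * ((ph : ℝ) - 1) / 2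
            - (s₂ : ℝ) * ((ph : ℝ) + f)
            + ((l : ℝ) + e) * ((ph : ℝ) + f) - ((l : ℝ) + e) ^ 2 - ((ph : ℝ) + f) ^ 2)
      = q ^ ((e:ℤ)*(f:ℤ) - (s₁+l-ph)*e - tri e) * q ^ (-(tri f) - (s₂+ph-l)*(f:ℤ)) := by
    rw [← Real.rpow_add h0, ← zpow_add₀ hqne, ← Real.rpow_intCast q]
    congr 1
    push_cast [tri_cast]
    ring
  trans ((q:ℝ) ^ ((e:ℤ)*(f:ℤ) - (s₁+l-ph)*(e:ℤ) - tri e) * q ^ (-(tri f) - (s₂+ph-l)*(f:ℤ)) *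
      ((-1:ℝ)^(e+f) * (etaQ q (lm-l).toNat * etaQ q (pm-ph).toNat) /
        (etaQ q e * etaQ q ((lm - l).toNat - e) * etaQ q f * etaQ q ((pm - ph).toNat - f))))
  · rw [← key]; ring
  · rw [pow_add, qb, qb]; ring


lemma Qbar_swap (lm l pm ph s₁ s₂ : ℤ) :
    Qbar q lm l pm ph s₁ s₂ = Qbar q pm ph lm l s₂ s₁ := by
  rw [Qbar, Qbar, Qf, Qf]
  rw [Finset.sum_comm (s := Finset.range ((lm - l).toNat + 1))
      (t := Finset.range ((pm - ph).toNat + 1))]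
  have hQ : ∀ x y : ℝ, ∀ u v : ℝ, x = y → u = v → x * u = y * v := by
    intro x y u v h1 h2; rw [h1, h2]
  refine hQ _ _ _ _ (by ring) (Finset.sum_congr rfl fun f _ => Finset.sum_congr rfl fun e _ => ?_)
  rw [add_comm f e]
  have hexp : ((l : ℝ) + e) * ((l : ℝ) + e - 1) / 2 - (l : ℝ) * ((l : ℝ) - 1) / 2
            - (s₁ : ℝ) * ((l : ℝ) + e)
            + ((ph : ℝ) + f) * ((ph : ℝ) + f - 1) / 2 - (ph : ℝ) * ((ph : ℝ) - 1) / 2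
            - (s₂ : ℝ) * ((ph : ℝ) + f)
            + ((l : ℝ) + e) * ((ph : ℝ) + f) - ((l : ℝ) + e) ^ 2 - ((ph : ℝ) + f) ^ 2
      = ((ph : ℝ) + f) * ((ph : ℝ) + f - 1) / 2 - (ph : ℝ) * ((ph : ℝ) - 1) / 2
            - (s₂ : ℝ) * ((ph : ℝ) + f)
            + ((l : ℝ) + e) * ((l : ℝ) + e - 1) / 2 - (l : ℝ) * ((l : ℝ) - 1) / 2
            - (s₁ : ℝ) * ((l : ℝ) + e)
            + ((ph : ℝ) + f) * ((l : ℝ) + e) - ((ph : ℝ) + f) ^ 2 - ((l : ℝ) + e) ^ 2 := by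
    ring
  rw [hexp]
  ring

lemma Pf_zero (hq : 1 < q) {a : ℕ} {α : ℤ} {f : ℕ} (h1 : α < (f:ℤ)) (h2 : (f:ℤ) ≤ α + a) :
    Pf q a α f = 0 := by
  have hqne : q ≠ 0 := by positivity
  refine Finset.prod_eq_zero (i := ((f:ℤ) - α - 1).toNat) (Finset.mem_range.mpr ?_) ?_
  · omega
  · have : (f:ℤ) - 1 - α - (((f:ℤ) - α - 1).toNat : ℤ) = 0 := by omega
    rw [this, zpow_zero]; ring

lemma Pf_pos (hq : 1 < q) {a : ℕ} {α : ℤ} {f : ℕ} (h1 : (f:ℤ) ≤ α) : 0 < Pf q a α f := by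
  refine Finset.prod_pos fun i _ => ?_
  have : q ^ ((f:ℤ) - 1 - α - i) < 1 := zpow_lt_one_of_neg₀ hq (by omega)
  linarith


lemma alt_shift (t : ℕ → ℝ) (n : ℕ) :
    ∑ f ∈ Finset.range (n+1), (-1:ℝ)^f * t f
      = t 0 - ∑ f ∈ Finset.range n, (-1:ℝ)^f * t (f+1) := by
  rw [Finset.sum_range_succ' (fun f => (-1:ℝ)^f * t f) n]
  have : ∀ i ∈ Finset.range n, (-1:ℝ)^(i+1) * t (i+1) = -((-1:ℝ)^i * t (i+1)) :=
    fun i _ => by rw [pow_succ]; ring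
  rw [Finset.sum_congr rfl this, Finset.sum_neg_distrib]
  show -∑ f ∈ Finset.range n, (-1:ℝ)^f * t (f+1) + (-1:ℝ)^0 * t 0 = _
  rw [pow_zero, one_mul]
  ring

lemma alt_bound : ∀ (n : ℕ) (t : ℕ → ℝ), (∀ f, 0 ≤ t f) → (∀ f, t (f+1) ≤ t f) →
    0 ≤ ∑ f ∈ Finset.range n, (-1:ℝ)^f * t f ∧
      ∑ f ∈ Finset.range n, (-1:ℝ)^f * t f ≤ t 0 := by
  intro n
  induction n with
  | zero => intro t h0 _; simp [h0 0]
  | succ n ih =>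
    intro t h0 h1
    have hs := alt_shift t n
    obtain ⟨ih1, ih2⟩ := ih (fun i => t (i+1)) (fun f => h0 _) (fun f => h1 _)
    rw [hs]
    constructor
    · have h2 : t 1 ≤ t 0 := h1 0
      norm_num at ih2
      linarith
    · linarith

lemma main_ineq (hq2 : 2 ≤ q) {a b : ℕ} {α β : ℤ} (hβ : 0 ≤ β) {f : ℕ}
    (hf1 : (f:ℤ) + 1 ≤ α) (hf2 : f + 1 ≤ b) :
    q ^ (-(1:ℤ) - f - β) * (1 - q⁻¹ ^ (b - f)) * (1 - q ^ ((f:ℤ) - α))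
      < (1 - q⁻¹ ^ (f+1)) * (1 - q ^ ((f:ℤ) - α - a)) := by
  have hq : 1 < q := by linarith
  have h0 : (0:ℝ) < q := by linarith
  have hinv : q⁻¹ ≤ 2⁻¹ := by rw [inv_le_inv₀ (by linarith) (by norm_num)]; exact hq2
  have hinv0 : (0:ℝ) ≤ q⁻¹ := by positivity
  have hinv1 : q⁻¹ ≤ 1 := le_trans hinv (by norm_num)
  have hu : q⁻¹ ^ (f+1) ≤ 2⁻¹ :=
    le_trans (pow_le_of_le_one hinv0 hinv1 (Nat.succ_ne_zero f)) hinv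
  have hA : q ^ (-(1:ℤ) - f - β) ≤ 2⁻¹ := by
    calc q ^ (-(1:ℤ) - f - β) ≤ q ^ (-1 : ℤ) := zpow_le_zpow_right₀ hq.le (by omega)
    _ = q⁻¹ := zpow_neg_one q
    _ ≤ 2⁻¹ := hinv
  have hApos : (0:ℝ) < q ^ (-(1:ℤ) - f - β) := zpow_pos h0 _
  have hBpos : (0:ℝ) < 1 - q⁻¹ ^ (b - f) := one_sub_pow_pos hq _ (by omega)
  have hBlt : 1 - q⁻¹ ^ (b - f) < 1 := by
    have : (0:ℝ) < q⁻¹ ^ (b - f) := by positivity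
    linarith
  have hCpos : (0:ℝ) < 1 - q ^ ((f:ℤ) - α) := by
    have : q ^ ((f:ℤ) - α) < 1 := zpow_lt_one_of_neg₀ hq (by omega)
    linarith
  have hDpos : (0:ℝ) < 1 - q ^ ((f:ℤ) - α - a) := by
    have : q ^ ((f:ℤ) - α - a) < 1 := zpow_lt_one_of_neg₀ hq (by omega)
    linarith
  have hCD : 1 - q ^ ((f:ℤ) - α) ≤ 1 - q ^ ((f:ℤ) - α - a) := by
    have : q ^ ((f:ℤ) - α - a) ≤ q ^ ((f:ℤ) - α) := zpow_le_zpow_right₀ hq.le (by omega)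
    linarith
  nlinarith [mul_pos hApos hCpos, mul_pos hBpos hCpos, mul_pos hApos (mul_pos hBpos hCpos),
    mul_le_mul_of_nonneg_right hA hDpos.le,
    mul_lt_mul_of_pos_left hBlt (mul_pos hApos hCpos)]


lemma Qbar_zero_left (hq : 1 < q) {lm l pm ph s₁ s₂ : ℤ} (hl : l ≤ lm) (hp : ph ≤ pm)
    (hα : s₁ + l - ph < 0) (hα' : 0 ≤ s₁ + lm - pm) :
    Qbar q lm l pm ph s₁ s₂ = 0 := by
  rw [Qbar_repr hq]
  refine Finset.sum_eq_zero fun f hf => ?_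
  have ha : ((lm-l).toNat : ℤ) = lm - l := Int.toNat_of_nonneg (by omega)
  have hb : ((pm-ph).toNat : ℤ) = pm - ph := Int.toNat_of_nonneg (by omega)
  have hfb : f ≤ (pm-ph).toNat := by
    have := Finset.mem_range.mp hf; omega
  rw [Pf_zero hq (by omega) (by
    have : (f:ℤ) ≤ ((pm-ph).toNat : ℤ) := by exact_mod_cast hfb
    omega)]
  ring

lemma Qbar_zero_right (hq : 1 < q) {lm l pm ph s₁ s₂ : ℤ} (hl : l ≤ lm) (hp : ph ≤ pm)
    (hβ : s₂ + ph - l < 0) (hβ' : 0 ≤ s₂ + pm - lm) :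
    Qbar q lm l pm ph s₁ s₂ = 0 := by
  rw [Qbar_swap]
  exact Qbar_zero_left hq hp hl hβ hβ'

lemma Qbar_pos (hq2 : 2 ≤ q) {lm l pm ph s₁ s₂ : ℤ} (hl : l ≤ lm) (hp : ph ≤ pm)
    (hα : 0 ≤ s₁ + l - ph) (hβ : 0 ≤ s₂ + ph - l) (hα' : 0 ≤ s₁ + lm - pm) :
    0 < Qbar q lm l pm ph s₁ s₂ := by
  have hq : 1 < q := by linarith
  have h0 : (0:ℝ) < q := by linarith
  have hqne : q ≠ 0 := h0.ne'
  rw [Qbar_repr hq]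
  set a := (lm-l).toNat with hadef
  set b := (pm-ph).toNat with hbdef
  set α := s₁ + l - ph with hαdef
  set β := s₂ + ph - l with hβdef
  have ha : (a:ℤ) = lm - l := Int.toNat_of_nonneg (by omega)
  have hb : (b:ℤ) = pm - ph := Int.toNat_of_nonneg (by omega)
  have hba : (b:ℤ) ≤ α + a := by omega
  set t : ℕ → ℝ := fun f =>
    if f ≤ b then qb q b f * q ^ (-(tri f) - β*(f:ℤ)) * Pf q a α f else 0 with htdef
  have t_pos : ∀ f : ℕ, f ≤ b → (f:ℤ) ≤ α → 0 < t f := by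
    intro f h1 h2
    have : t f = qb q b f * q ^ (-(tri f) - β*(f:ℤ)) * Pf q a α f := by
      simp only [htdef, if_pos h1]
    rw [this]
    exact mul_pos (mul_pos (qb_pos hq _ _) (zpow_pos h0 _)) (Pf_pos hq h2)
  have t_zero : ∀ f : ℕ, α < (f:ℤ) → t f = 0 := by
    intro f h2
    by_cases h1 : f ≤ b
    · have hP : Pf q a α f = 0 := Pf_zero hq h2 (by
        have : (f:ℤ) ≤ (b:ℤ) := by exact_mod_cast h1
        omega)
      simp only [htdef, if_pos h1, hP, mul_zero]
    · simp only [htdef, if_neg h1]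
  have t_nonneg : ∀ f : ℕ, 0 ≤ t f := by
    intro f
    by_cases h2 : (f:ℤ) ≤ α
    · by_cases h1 : f ≤ b
      · exact (t_pos f h1 h2).le
      · simp only [htdef, if_neg h1]; exact le_refl 0
    · rw [t_zero f (by omega)]
  have t_step : ∀ f : ℕ, (f:ℤ) + 1 ≤ α → f + 1 ≤ b → t (f+1) < t f := by
    intro f hf1 hf2
    have hfb : f ≤ b := by omega
    have hfα : (f:ℤ) ≤ α := by omega
    -- identities
    have hbf : b - f = (b - (f+1)) + 1 := by omega
    have hqb : qb q b (f+1) * (1 - q⁻¹ ^ (f+1)) = qb q b f * (1 - q⁻¹ ^ (b - f)) := by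
      rw [qb, qb, etaQ_succ h0 f, hbf, etaQ_succ h0 (b - (f+1)), ← hbf]
      have h1 := (etaQ_pos hq b).ne'
      have h2 := (etaQ_pos hq f).ne'
      have h3 := (etaQ_pos hq (b - (f+1))).ne'
      have h4 := (one_sub_pow_pos hq (f+1) (Nat.succ_ne_zero f)).ne'
      have h5 := (one_sub_pow_pos hq (b-f) (by omega)).ne'
      set u := q⁻¹ ^ (f+1) with hu
      set v := q⁻¹ ^ (b-f) with hv
      field_simp
    have hqx : q ^ (-(tri (f+1)) - β*((f+1:ℕ):ℤ))
        = q ^ (-(tri f) - β*(f:ℤ)) * q ^ (-(1:ℤ) - f - β) := by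
      rw [← zpow_add₀ hqne]
      congr 1
      rw [tri_succ]
      push_cast
      ring
    have hPf : Pf q a α (f+1) * (1 - q ^ ((f:ℤ) - α - a))
        = Pf q a α f * (1 - q ^ ((f:ℤ) - α)) := by
      have e1 : Pf q a α (f+1) = ∏ i ∈ Finset.range a, (1 - q ^ ((f:ℤ) - α - i)) := by
        simp only [Pf]
        refine Finset.prod_congr rfl fun i _ => ?_
        congr 2
        push_cast
        ring
      have eA : ∏ i ∈ Finset.range (a+1), (1 - q ^ ((f:ℤ) - α - i))
          = Pf q a α (f+1) * (1 - q ^ ((f:ℤ) - α - a)) := by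
        rw [Finset.prod_range_succ, e1]
      have eB : ∏ i ∈ Finset.range (a+1), (1 - q ^ ((f:ℤ) - α - i))
          = Pf q a α f * (1 - q ^ ((f:ℤ) - α)) := by
        rw [Finset.prod_range_succ' (fun i => (1 - q ^ ((f:ℤ) - α - i))) a]
        congr 1
        · simp only [Pf]
          refine Finset.prod_congr rfl fun i _ => ?_
          congr 2
          push_cast
          ring
        · show (1:ℝ) - q ^ ((f:ℤ) - α - ((0:ℕ):ℤ)) = 1 - q ^ ((f:ℤ) - α)
          congr 2
          push_cast
          ring
      rw [← eA, eB]
    -- combine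
    have hts : t (f+1) = qb q b (f+1) * q ^ (-(tri (f+1)) - β*((f+1:ℕ):ℤ)) * Pf q a α (f+1) := by
      simp only [htdef, if_pos hf2]
    have htf : t f = qb q b f * q ^ (-(tri f) - β*(f:ℤ)) * Pf q a α f := by
      simp only [htdef, if_pos hfb]
    have hK1pos : (0:ℝ) < (1 - q⁻¹ ^ (f+1)) * (1 - q ^ ((f:ℤ) - α - a)) := by
      refine mul_pos (one_sub_pow_pos hq _ (Nat.succ_ne_zero f)) ?_
      have : q ^ ((f:ℤ) - α - a) < 1 := zpow_lt_one_of_neg₀ hq (by omega)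
      linarith
    have hstepmul : t (f+1) * ((1 - q⁻¹ ^ (f+1)) * (1 - q ^ ((f:ℤ) - α - a)))
        = t f * (q ^ (-(1:ℤ) - f - β) * (1 - q⁻¹ ^ (b - f)) * (1 - q ^ ((f:ℤ) - α))) := by
      calc t (f+1) * ((1 - q⁻¹ ^ (f+1)) * (1 - q ^ ((f:ℤ) - α - a)))
          = (qb q b (f+1) * (1 - q⁻¹ ^ (f+1))) * q ^ (-(tri (f+1)) - β*((f+1:ℕ):ℤ))
              * (Pf q a α (f+1) * (1 - q ^ ((f:ℤ) - α - a))) := by rw [hts]; ring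
        _ = (qb q b f * (1 - q⁻¹ ^ (b - f)))
              * (q ^ (-(tri f) - β*(f:ℤ)) * q ^ (-(1:ℤ) - f - β))
              * (Pf q a α f * (1 - q ^ ((f:ℤ) - α))) := by rw [hqb, hqx, hPf]
        _ = t f * (q ^ (-(1:ℤ) - f - β) * (1 - q⁻¹ ^ (b - f)) * (1 - q ^ ((f:ℤ) - α))) := by
            rw [htf]; ring
    have hlt := main_ineq hq2 hβ hf1 hf2 (a := a)
    have htfpos := t_pos f hfb hfα
    have hfin : t (f+1) * ((1 - q⁻¹ ^ (f+1)) * (1 - q ^ ((f:ℤ) - α - a)))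
        < t f * ((1 - q⁻¹ ^ (f+1)) * (1 - q ^ ((f:ℤ) - α - a))) := by
      rw [hstepmul]
      exact (mul_lt_mul_iff_right₀ htfpos).mpr (by linarith [hlt])
    exact lt_of_mul_lt_mul_right hfin hK1pos.le
  -- antitone
  have t_anti : ∀ f : ℕ, t (f+1) ≤ t f := by
    intro f
    by_cases h1 : f+1 ≤ b
    · by_cases h2 : (f:ℤ)+1 ≤ α
      · exact (t_step f h2 h1).le
      · rw [t_zero (f+1) (by push_cast; omega)]
        exact t_nonneg f
    · have hz : t (f+1) = 0 := by simp only [htdef, if_neg h1]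
      rw [hz]
      exact t_nonneg f
  -- assemble
  have hrepr : ∑ f ∈ Finset.range (b+1), (-1:ℝ)^f *
        (qb q b f * q ^ (-(tri f) - β*(f:ℤ)) * Pf q a α f)
      = ∑ f ∈ Finset.range (b+1), (-1:ℝ)^f * t f := by
    refine Finset.sum_congr rfl fun f hf => ?_
    have hfb : f ≤ b := by have := Finset.mem_range.mp hf; omega
    simp only [htdef, if_pos hfb]
  rw [hrepr, alt_shift]
  have ht0pos : 0 < t 0 := t_pos 0 (by omega) (by simpa using hα)
  rcases Nat.eq_zero_or_pos b with hb0 | hbpos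
  · rw [hb0]
    simp only [Finset.range_zero, Finset.sum_empty]
    linarith
  · have hub := (alt_bound b (fun i => t (i+1)) (fun f => t_nonneg _) (fun f => t_anti _)).2
    have h10 : t 1 < t 0 := by
      by_cases hα1 : (1:ℤ) ≤ α
      · exact t_step 0 (by simpa using hα1) (by omega)
      · rw [t_zero 1 (by push_cast; omega)]
        exact ht0pos
    norm_num at hub
    linarith


lemma one_sub_ge_exp (u c : ℝ) (hu0 : 0 ≤ u) (hu : u ≤ 1/2) (hc : 2 ≤ c) :
    Real.exp (-(c * u)) ≤ 1 - u := by
  have h1 : Real.exp (c * u) ≥ 1 + c * u := by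
    have := Real.add_one_le_exp (c * u)
    linarith
  have h0 : 0 ≤ c - 1 - c * u := by nlinarith [mul_le_mul_of_nonneg_left hu (show (0:ℝ) ≤ c by linarith)]
  have h2 : (1 - u) * (1 + c * u) ≥ 1 := by nlinarith [mul_nonneg hu0 h0]
  have h3 : 0 < 1 + c * u := by nlinarith
  rw [Real.exp_neg]
  rw [inv_le_iff_one_le_mul₀ (by positivity)]
  nlinarith [Real.exp_pos (c * u)]

lemma log_nine_ge_two : (2:ℝ) ≤ Real.log 9 := by
  rw [Real.le_log_iff_exp_le (by norm_num)]
  have h := Real.exp_one_lt_d9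
  have h2 : Real.exp 2 = Real.exp 1 * Real.exp 1 := by
    rw [← Real.exp_add]; norm_num
  nlinarith [Real.exp_pos 1]

lemma partial_bound (hq : 2 ≤ q) (S : Finset ℕ) :
    (1:ℝ)/9 ≤ ∏ i ∈ S, (1 - q ^ (-(i : ℝ) - 1)) := by
  have hq0 : (0:ℝ) < q := by linarith
  have hfac : ∀ i : ℕ, q ^ (-(i:ℝ) - 1) = q⁻¹ ^ (i+1) := by
    intro i
    rw [show -(i:ℝ) - 1 = -(((i+1 : ℕ) : ℝ)) by push_cast; ring, Real.rpow_neg hq0.le,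
      Real.rpow_natCast, inv_pow]
  have hinv : q⁻¹ ≤ 2⁻¹ := by rw [inv_le_inv₀ (by linarith) (by norm_num)]; exact hq
  have hinv0 : (0:ℝ) ≤ q⁻¹ := by positivity
  have step1 : ∀ i : ℕ, Real.exp (-(Real.log 9 * (2⁻¹:ℝ) ^ (i+1))) ≤ 1 - q ^ (-(i:ℝ) - 1) := by
    intro i
    rw [hfac i]
    have hu1 : q⁻¹ ^ (i+1) ≤ (2⁻¹:ℝ) ^ (i+1) := pow_le_pow_left₀ hinv0 hinv (i+1)
    have hu2 : (2⁻¹:ℝ) ^ (i+1) ≤ 1/2 := by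
      calc (2⁻¹:ℝ) ^ (i+1) ≤ (2⁻¹:ℝ) ^ 1 := pow_le_pow_of_le_one (by norm_num) (by norm_num) (by omega)
      _ = 1/2 := by norm_num
    calc Real.exp (-(Real.log 9 * (2⁻¹:ℝ) ^ (i+1)))
        ≤ Real.exp (-(Real.log 9 * q⁻¹ ^ (i+1))) := by
          apply Real.exp_le_exp.mpr
          have hl9 : (0:ℝ) ≤ Real.log 9 := by linarith [log_nine_ge_two]
          nlinarith
      _ ≤ 1 - q⁻¹ ^ (i+1) := one_sub_ge_exp _ _ (by positivity) (le_trans hu1 hu2) log_nine_ge_two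
  calc (1:ℝ)/9 = Real.exp (-(Real.log 9)) := by
        rw [Real.exp_neg, Real.exp_log (by norm_num)]; norm_num
    _ ≤ Real.exp (-(Real.log 9 * ∑ i ∈ S, (2⁻¹:ℝ) ^ (i+1))) := by
        apply Real.exp_le_exp.mpr
        have hsum : ∑ i ∈ S, (2⁻¹:ℝ) ^ (i+1) ≤ 1 := by
          have h1 : ∑ i ∈ S, (2⁻¹:ℝ) ^ (i+1) ≤ ∑' i : ℕ, (2⁻¹:ℝ) ^ (i+1) := by
            apply Summable.sum_le_tsum S (fun i _ => by positivity)
            have : Summable (fun i : ℕ => (2⁻¹:ℝ) ^ i) := summable_geometric_of_lt_one (by norm_num) (by norm_num)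
            exact this.mul_left 2⁻¹ |>.congr (fun i => by rw [pow_succ]; ring)
          have h2 : ∑' i : ℕ, (2⁻¹:ℝ) ^ (i+1) = 1 := by
            have := tsum_geometric_of_lt_one (r := (2⁻¹:ℝ)) (by norm_num) (by norm_num)
            calc ∑' i : ℕ, (2⁻¹:ℝ) ^ (i+1) = ∑' i : ℕ, 2⁻¹ * (2⁻¹:ℝ) ^ i := by
                  congr 1; funext i; rw [pow_succ]; ring
              _ = 2⁻¹ * ∑' i : ℕ, (2⁻¹:ℝ) ^ i := by rw [tsum_mul_left]
              _ = 1 := by rw [this]; norm_num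
          linarith
        have hl9 : (0:ℝ) ≤ Real.log 9 := by linarith [log_nine_ge_two]
        nlinarith
    _ = ∏ i ∈ S, Real.exp (-(Real.log 9 * (2⁻¹:ℝ) ^ (i+1))) := by
        rw [← Real.exp_sum]
        congr 1
        rw [Finset.mul_sum, ← Finset.sum_neg_distrib]
    _ ≤ ∏ i ∈ S, (1 - q ^ (-(i : ℝ) - 1)) := by
        refine Finset.prod_le_prod (fun i _ => (Real.exp_pos _).le) (fun i _ => step1 i)

lemma etaInf_pos (hq : 2 ≤ q) : 0 < etaInf q := by
  rw [etaInf]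
  by_cases h : Multipliable (fun i : ℕ => (1 - q ^ (-(i : ℝ) - 1)))
  · have := ge_of_tendsto' h.hasProd (fun S => partial_bound hq S)
    linarith
  · rw [tprod_eq_one_of_not_multipliable h]; norm_num


lemma etaZ_pos (hq : 1 < q) (n : ℤ) : 0 < etaZ q n := etaQ_pos hq _

end Stmt9

/-- Let `q` be a prime power, `s₁, s₂ ≥ 0` integers, `r ≥ 1` an integer.  Then
`ν(λ,φ) ≥ 0` for all partitions `λ, φ`, and `ν(λ,φ) > 0` iff `-s₁ ≤ λ_j - φ_j ≤ s₂` for all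
`1 ≤ j ≤ r`. -/

theorem stmt_9 (q : ℕ) (hq : IsPrimePow q)
    (s₁ s₂ : ℤ) (hs₁ : 0 ≤ s₁) (hs₂ : 0 ≤ s₂) (r : ℕ) (hr : 1 ≤ r)
    (lam ph : PartitionSeq) :
    0 ≤ nuDP (q : ℝ) s₁ s₂ r lam.1 ph.1 ∧
    (0 < nuDP (q : ℝ) s₁ s₂ r lam.1 ph.1 ↔
      ∀ j < r, -s₁ ≤ (lam.1 j : ℤ) - (ph.1 j : ℤ) ∧ (lam.1 j : ℤ) - (ph.1 j : ℤ) ≤ s₂) := by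
  classical
  have hq2 : (2:ℝ) ≤ (q:ℝ) := by exact_mod_cast hq.two_le
  have hq1 : (1:ℝ) < (q:ℝ) := by linarith
  have hq0 : (0:ℝ) < (q:ℝ) := by linarith
  set L := lam.1 with hL
  set P := ph.1 with hP
  have hLmono : ∀ i, L (i+1) ≤ L i := lam.2.1
  have hPmono : ∀ i, P (i+1) ≤ P i := ph.2.1
  set Good : ℕ → Prop := fun j => -s₁ ≤ (L j : ℤ) - (P j : ℤ) ∧ (L j : ℤ) - (P j : ℤ) ≤ s₂
    with hGood
  -- positive case
  have hpos : (∀ j < r, Good j) → 0 < nuDP (q:ℝ) s₁ s₂ r L P := by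
    intro hall
    have h0good := hall 0 (by omega)
    rw [nuDP, if_neg (by
      obtain ⟨h1, h2⟩ := h0good
      omega)]
    have hA : (0:ℝ) < (q:ℝ) ^ ((∑ j ∈ Finset.range r, (L j : ℝ) * (P j : ℝ))
          + ∑' j : ℕ, (-(L j : ℝ) ^ 2 - (s₁ : ℝ) * (L j : ℝ)
              - (P j : ℝ) ^ 2 - (s₂ : ℝ) * (P j : ℝ))) := Real.rpow_pos_of_pos hq0 _
    have hB : (0:ℝ) < ∏' j : ℕ, (etaQ (q:ℝ) (L j - L (j+1)) * etaQ (q:ℝ) (P j - P (j+1))) := by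
      obtain ⟨N1, hN1⟩ := lam.2.2
      obtain ⟨N2, hN2⟩ := ph.2.2
      have hone : ∀ j ∉ Finset.range (max N1 N2),
          etaQ (q:ℝ) (L j - L (j+1)) * etaQ (q:ℝ) (P j - P (j+1)) = 1 := by
        intro j hj
        have hj' : max N1 N2 ≤ j := by simpa [Finset.mem_range, not_lt] using hj
        rw [hL] at *
        rw [hN1 j (by omega), hN1 (j+1) (by omega)]
        rw [hP] at *
        rw [hN2 j (by omega), hN2 (j+1) (by omega)]
        simp [etaQ]
      rw [tprod_eq_prod hone]
      exact Finset.prod_pos fun j _ =>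
        mul_pos (Stmt9.etaQ_pos hq1 _) (Stmt9.etaQ_pos hq1 _)
    have hC : (0:ℝ) < etaInf (q:ℝ) * etaZ (q:ℝ) (s₁ + s₂) /
        (etaZ (q:ℝ) (s₂ - (L 0 : ℤ) + (P 0 : ℤ)) * etaZ (q:ℝ) (s₁ + (L 0 : ℤ) - (P 0 : ℤ))) :=
      div_pos (mul_pos (Stmt9.etaInf_pos hq2) (Stmt9.etaZ_pos hq1 _))
        (mul_pos (Stmt9.etaZ_pos hq1 _) (Stmt9.etaZ_pos hq1 _))
    have hD : (0:ℝ) < ∏ j ∈ Finset.range (r - 1),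
        Qbar (q:ℝ) (L j : ℤ) (L (j + 1) : ℤ) (P j : ℤ) (P (j + 1) : ℤ) s₁ s₂ := by
      refine Finset.prod_pos fun j hj => ?_
      have hjr : j < r - 1 := Finset.mem_range.mp hj
      obtain ⟨g1, g2⟩ := hall (j+1) (by omega)
      obtain ⟨g3, g4⟩ := hall j (by omega)
      refine Stmt9.Qbar_pos hq2 ?_ ?_ (by omega) (by omega) (by omega)
      · exact_mod_cast hLmono j
      · exact_mod_cast hPmono j
    have hE1 : (0:ℝ) < ∏ i ∈ Finset.range (L (r - 1)),
        (1 - (q:ℝ) ^ (-(s₁ : ℝ) - ((i : ℝ) + 1))) := by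
      refine Finset.prod_pos fun i _ => ?_
      have hx : ((q:ℝ)) ^ (-(s₁ : ℝ) - ((i : ℝ) + 1)) < 1 := by
        apply Real.rpow_lt_one_of_one_lt_of_neg hq1
        have h1 : (0:ℝ) ≤ (s₁:ℝ) := by exact_mod_cast hs₁
        have h2 : (0:ℝ) ≤ (i:ℝ) := Nat.cast_nonneg i
        linarith
      linarith
    have hE2 : (0:ℝ) < ∏ i ∈ Finset.range (P (r - 1)),
        (1 - (q:ℝ) ^ (-(s₂ : ℝ) - ((i : ℝ) + 1))) := by
      refine Finset.prod_pos fun i _ => ?_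
      have hx : ((q:ℝ)) ^ (-(s₂ : ℝ) - ((i : ℝ) + 1)) < 1 := by
        apply Real.rpow_lt_one_of_one_lt_of_neg hq1
        have h1 : (0:ℝ) ≤ (s₂:ℝ) := by exact_mod_cast hs₂
        have h2 : (0:ℝ) ≤ (i:ℝ) := Nat.cast_nonneg i
        linarith
      linarith
    exact mul_pos (mul_pos (mul_pos (mul_pos (div_pos hA hB) hC) hD) hE1) hE2
  -- zero case
  have hzero : (¬ ∀ j < r, Good j) → nuDP (q:ℝ) s₁ s₂ r L P = 0 := by
    intro hnall
    push_neg at hnall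
    obtain ⟨j, hjr, hjbad⟩ := hnall
    have hex : ∃ k, ¬ Good k := ⟨j, hjbad⟩
    have hkbad : ¬ Good (Nat.find hex) := Nat.find_spec hex
    have hkmin : ∀ m < Nat.find hex, Good m := fun m hm => not_not.mp (Nat.find_min hex hm)
    have hkr : Nat.find hex < r := lt_of_le_of_lt (Nat.find_min' hex hjbad) hjr
    rcases Nat.eq_zero_or_pos (Nat.find hex) with hk0 | hk1
    · rw [hk0] at hkbad
      rw [nuDP, if_pos (by
        simp only [hGood] at hkbad
        omega)]
    · set k' := Nat.find hex - 1 with hk'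
      have hkk : Nat.find hex = k' + 1 := by omega
      rw [hkk] at hkbad
      have hgk' : Good k' := hkmin k' (by omega)
      have hg0 : Good 0 := hkmin 0 (by omega)
      rw [nuDP, if_neg (by
        obtain ⟨h1, h2⟩ := hg0
        omega)]
      have hl : (L (k'+1) : ℤ) ≤ (L k' : ℤ) := by exact_mod_cast hLmono k'
      have hp : (P (k'+1) : ℤ) ≤ (P k' : ℤ) := by exact_mod_cast hPmono k'
      have hfac : Qbar (q:ℝ) (L k' : ℤ) (L (k' + 1) : ℤ) (P k' : ℤ) (P (k' + 1) : ℤ) s₁ s₂ = 0 := by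
        obtain ⟨g3, g4⟩ := hgk'
        simp only [hGood, not_and_or, not_le] at hkbad
        rcases hkbad with hb1 | hb2
        · exact Stmt9.Qbar_zero_left hq1 hl hp (by omega) (by omega)
        · exact Stmt9.Qbar_zero_right hq1 hl hp (by omega) (by omega)
      have hprod : ∏ j ∈ Finset.range (r - 1),
          Qbar (q:ℝ) (L j : ℤ) (L (j + 1) : ℤ) (P j : ℤ) (P (j + 1) : ℤ) s₁ s₂ = 0 :=
        Finset.prod_eq_zero (Finset.mem_range.mpr (by omega : k' < r - 1)) hfac
      rw [hprod]
      ring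
  constructor
  · by_cases hall : ∀ j < r, Good j
    · exact (hpos hall).le
    · rw [hzero hall]
  · constructor
    · intro hν j hj
      by_contra hbad
      have hna : ¬ ∀ j < r, Good j := by
        intro hall
        exact hbad (hall j hj)
      rw [hzero hna] at hν
      exact lt_irrefl 0 hν
    · intro hall
      exact hpos fun j hj => hall j hj
end

section
/- Let Γ be a finite group and Γ' a proper subgroup of Γ. Let Γ act on the ℂ-vector space of functions f : Γ/Γ' → ℂ by (γ·f)(x) = f(γ⁻¹·x), and let W be the Γ-invariant subspace consisting of those f with ∑_{x ∈ Γ/Γ'} f(x) = 0. If W is a simple ℂ[Γ]-module, then the order of Γ is even. -/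
open scoped BigOperators

/-- The linear functional `f ↦ ∑_x f(x)` on the space of functions `X → k`. -/
noncomputable def sumLin (X : Type*) [Fintype X] (k : Type*) [CommRing k] :
    (X → k) →ₗ[k] k where
  toFun f := ∑ x, f x
  map_add' f g := by simp [Finset.sum_add_distrib]
  map_smul' c f := by simp [Finset.mul_sum]

/-- The subspace `W = {f : G⧸H → k | ∑_x f(x) = 0}` of the space of `k`-valued functions
on the coset space `G ⧸ H`. -/
noncomputable def zeroSumFns (G : Type*) [Group G] (H : Subgroup G) [Fintype (G ⧸ H)]
    (k : Type*) [CommRing k] : Submodule k ((G ⧸ H) → k) :=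
  LinearMap.ker (sumLin (G ⧸ H) k)

/-- The representation of `G` on `W = {f : G⧸H → k | ∑_x f(x) = 0}`, where
`(γ · f)(x) = f(γ⁻¹ · x)`. -/
noncomputable def cosetRep (G : Type*) [Group G] (H : Subgroup G) [Fintype (G ⧸ H)]
    (k : Type*) [CommRing k] : Representation k G (zeroSumFns G H k) where
  toFun γ :=
    { toFun := fun f => ⟨fun x => f.1 (γ⁻¹ • x), by
        have hf : ∑ x, f.1 x = 0 := f.2
        have : ∑ x, f.1 (γ⁻¹ • x) = ∑ x, f.1 x :=
          Fintype.sum_equiv (MulAction.toPerm (γ⁻¹ : G)) _ _ (fun x => rfl)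
        show ∑ x, f.1 (γ⁻¹ • x) = 0
        rw [this, hf]⟩
      map_add' := fun f g => rfl
      map_smul' := fun c f => rfl }
  map_one' := by
    apply LinearMap.ext
    intro f
    apply Subtype.ext
    funext x
    show f.1 ((1 : G)⁻¹ • x) = f.1 x
    simp
  map_mul' γ δ := by
    apply LinearMap.ext
    intro f
    apply Subtype.ext
    funext x
    show f.1 ((γ * δ)⁻¹ • x) = f.1 (δ⁻¹ • γ⁻¹ • x)
    rw [mul_inv_rev, mul_smul]

/-- Convolution-type linear map attached to a kernel `A`. -/
noncomputable def convMap (X : Type*) [Fintype X] (A : X → X → ℂ) :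
    (X → ℂ) →ₗ[ℂ] (X → ℂ) where
  toFun f := fun x => ∑ y, A x y * f y
  map_add' f g := by
    funext x
    simp [mul_add, Finset.sum_add_distrib]
  map_smul' c f := by
    funext x
    simp [Finset.mul_sum, mul_left_comm]

@[simp] lemma convMap_apply (X : Type*) [Fintype X] (A : X → X → ℂ) (f : X → ℂ) (x : X) :
    convMap X A f x = ∑ y, A x y * f y := rfl

/-- Lift a `ρ`-invariant `k`-subspace to a submodule over the monoid algebra. -/
noncomputable def liftInvariant {k G V : Type*} [CommSemiring k] [Monoid G]
    [AddCommMonoid V] [Module k V] (ρ : Representation k G V)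
    (E : Submodule k V) (hE : ∀ g : G, ∀ v ∈ E, ρ g v ∈ E) :
    Submodule (MonoidAlgebra k G) ρ.asModule where
  carrier := show Set ρ.asModule from (E : Set V)
  add_mem' h1 h2 := E.add_mem h1 h2
  zero_mem' := E.zero_mem
  smul_mem' := by
    intro r v hv
    show ρ.asAlgebraHom r v ∈ E
    induction r using MonoidAlgebra.induction with
    | zero => rw [map_zero]; exact E.zero_mem
    | single_add g c f _ _ ih =>
      rw [map_add]
      refine E.add_mem ?_ ih
      rw [Representation.asAlgebraHom_single]
      exact E.smul_mem c (hE g v hv)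

/-- Let `Γ` be a finite group and `Γ'` a proper subgroup.  Let `Γ` act on the
functions `Γ⧸Γ' → ℂ` by `(γ·f)(x) = f(γ⁻¹·x)` and let `W` be the invariant subspace of
functions summing to zero.  If `W` is a simple `ℂ[Γ]`-module, then `|Γ|` is even. -/
theorem stmt_10 (G : Type) [Group G] [Fintype G] (H : Subgroup G) (hH : H ≠ ⊤)
    [Fintype (G ⧸ H)]
    (hsimple : IsSimpleModule (MonoidAlgebra ℂ G) (cosetRep G H ℂ).asModule) :
    Even (Fintype.card G) := by
  classical
  obtain ⟨g₀, hg₀⟩ : ∃ g : G, g ∉ H := by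
    by_contra hc
    push_neg at hc
    exact hH ((Subgroup.eq_top_iff' H).mpr hc)
  set x₀ : G ⧸ H := ((1 : G) : G ⧸ H) with hx₀def
  set y₀ : G ⧸ H := ((g₀ : G) : G ⧸ H) with hy₀def
  have hxy : x₀ ≠ y₀ := by
    intro h
    apply hg₀
    have := QuotientGroup.eq.mp h
    simpa using this
  set O : Set ((G ⧸ H) × (G ⧸ H)) := MulAction.orbit G (x₀, y₀) with hOdef
  have hmemO : ∀ g : G, ∀ p : (G ⧸ H) × (G ⧸ H), p ∈ O → (g • p.1, g • p.2) ∈ O := by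
    rintro g p ⟨h, rfl⟩
    exact ⟨g * h, by simp [mul_smul, Prod.smul_mk]⟩
  have hmemO' : ∀ g : G, ∀ p : (G ⧸ H) × (G ⧸ H), (g • p.1, g • p.2) ∈ O ↔ p ∈ O := by
    intro g p
    constructor
    · intro h
      have := hmemO g⁻¹ _ h
      simpa using this
    · exact hmemO g p
  set A : (G ⧸ H) → (G ⧸ H) → ℂ := fun x y => if (x, y) ∈ O then 1 else 0 with hAdef
  have hAeq : ∀ (g : G) (x y : G ⧸ H), A (g • x) (g • y) = A x y := by
    intro g x y
    simp only [hAdef]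
    exact if_congr (hmemO' g (x, y)) rfl rfl
  have hAdiag : ∀ x, A x x = 0 := by
    intro x
    simp only [hAdef]
    rw [if_neg]
    rintro ⟨h, hh⟩
    apply hxy
    have h1 : h • x₀ = x := congrArg Prod.fst hh
    have h2 : h • y₀ = x := congrArg Prod.snd hh
    exact smul_left_cancel h (h1.trans h2.symm)
  have hcol : ∀ y, ∑ x, A x y = ∑ x, A x y₀ := by
    intro y
    obtain ⟨g, hg⟩ := MulAction.exists_smul_eq G y₀ y
    have h1 : ∑ x, A (g • x) (g • y₀) = ∑ x, A x (g • y₀) :=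
      Fintype.sum_equiv (MulAction.toPerm g) _ _ (fun x => rfl)
    rw [← hg, ← h1]
    simp only [hAeq]
  -- the operator on the big function space
  have hTW : ∀ f ∈ zeroSumFns G H ℂ, convMap (G ⧸ H) A f ∈ zeroSumFns G H ℂ := by
    intro f hf
    have hf' : ∑ x, f x = 0 := hf
    show ∑ x, convMap (G ⧸ H) A f x = 0
    simp only [convMap_apply]
    rw [Finset.sum_comm]
    have : ∀ y : G ⧸ H, ∑ x, A x y * f y = (∑ x, A x y₀) * f y := by
      intro y
      rw [← Finset.sum_mul, hcol]
    rw [Finset.sum_congr rfl (fun y _ => this y), ← Finset.mul_sum, hf', mul_zero]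
  set T : (zeroSumFns G H ℂ) →ₗ[ℂ] (zeroSumFns G H ℂ) := (convMap (G ⧸ H) A).restrict hTW
    with hTdef
  -- equivariance
  have hTcomm : ∀ (g : G) (w : zeroSumFns G H ℂ),
      T ((cosetRep G H ℂ) g w) = (cosetRep G H ℂ) g (T w) := by
    intro g w
    apply Subtype.ext
    funext x
    show ∑ y, A x y * w.1 (g⁻¹ • y) = ∑ y, A (g⁻¹ • x) y * w.1 y
    have hre : ∑ z, A x (g • z) * w.1 z = ∑ y, A x y * w.1 (g⁻¹ • y) :=
      Fintype.sum_equiv (MulAction.toPerm g) _ _ (fun z => by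
        show A x (g • z) * w.1 z = A x (g • z) * w.1 (g⁻¹ • g • z)
        rw [inv_smul_smul])
    rw [← hre]
    refine Finset.sum_congr rfl fun z _ => ?_
    have : A x (g • z) = A (g⁻¹ • x) z := by
      conv_lhs => rw [← smul_inv_smul g x]
      rw [hAeq]
    rw [this]
  -- W is nontrivial
  have hmemδ : ∀ u v : G ⧸ H,
      (fun x => (if x = u then (1:ℂ) else 0) - (if x = v then 1 else 0)) ∈ zeroSumFns G H ℂ := by
    intro u v
    show (∑ x, ((if x = u then (1:ℂ) else 0) - (if x = v then 1 else 0))) = 0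
    rw [Finset.sum_sub_distrib]
    simp [Finset.sum_ite_eq']
  haveI : Nontrivial (zeroSumFns G H ℂ) := by
    refine ⟨⟨⟨_, hmemδ x₀ y₀⟩, 0, ?_⟩⟩
    intro hc
    have := congrFun (congrArg Subtype.val hc) x₀
    simp [hxy] at this
  obtain ⟨μ, hμ⟩ := Module.End.exists_eigenvalue T
  set E := Module.End.eigenspace T μ with hEdef
  have hEinv : ∀ g : G, ∀ v ∈ E, (cosetRep G H ℂ) g v ∈ E := by
    intro g v hv
    rw [Module.End.mem_eigenspace_iff] at hv ⊢
    rw [hTcomm g v, hv, map_smul]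
  set S := liftInvariant (cosetRep G H ℂ) E hEinv with hSdef
  have hSne : S ≠ ⊥ := by
    intro hb
    apply hμ
    rw [Submodule.eq_bot_iff] at hb ⊢
    intro v hv
    exact hb v (show _ ∈ S from hv)
  have hStop : S = ⊤ := (hsimple.1.2 S).resolve_left hSne
  have hall : ∀ w : zeroSumFns G H ℂ, T w = μ • w := by
    intro w
    have hw : (show (cosetRep G H ℂ).asModule from w) ∈ S := hStop ▸ Submodule.mem_top
    exact Module.End.mem_eigenspace_iff.mp (show w ∈ E from hw)
  -- all off-diagonal entries of A equal -μ
  have key : ∀ u v : G ⧸ H, u ≠ v → A u v = -μ := by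
    intro u v huv
    have h2 := congrFun (congrArg Subtype.val (hall ⟨_, hmemδ u v⟩)) u
    have hl : ((T ⟨_, hmemδ u v⟩ : zeroSumFns G H ℂ) : (G ⧸ H) → ℂ) u
        = ∑ y, A u y * ((if y = u then (1:ℂ) else 0) - (if y = v then 1 else 0)) := rfl
    rw [hl] at h2
    have hsum : ∑ y, A u y * ((if y = u then (1:ℂ) else 0) - (if y = v then 1 else 0))
        = A u u - A u v := by
      simp only [mul_sub, Finset.sum_sub_distrib, mul_ite, mul_one, mul_zero]
      rw [Finset.sum_ite_eq' _ u (fun y => A u y), Finset.sum_ite_eq' _ v (fun y => A u y)]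
      simp
    rw [hsum, hAdiag] at h2
    have h3 : (0:ℂ) - A u v = μ * ((if u = u then (1:ℂ) else 0) - (if u = v then 1 else 0)) := h2
    rw [if_pos rfl, if_neg huv] at h3
    have : (0:ℂ) - A u v = μ := by simpa using h3
    linear_combination -this
  have hA1 : A x₀ y₀ = 1 := by
    simp only [hAdef]
    rw [if_pos (MulAction.mem_orbit_self _)]
  have hμ1 : -μ = 1 := by rw [← key x₀ y₀ hxy, hA1]
  have hA2 : A y₀ x₀ = 1 := by rw [key y₀ x₀ hxy.symm, hμ1]
  have hmem : (y₀, x₀) ∈ O := by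
    by_contra hc
    simp only [hAdef] at hA2
    rw [if_neg hc] at hA2
    exact zero_ne_one hA2
  obtain ⟨g, hg⟩ := hmem
  have hg1 : g • x₀ = y₀ := congrArg Prod.fst hg
  have hg2 : g • y₀ = x₀ := congrArg Prod.snd hg
  have hg2x : g ^ 2 ∈ MulAction.stabilizer G x₀ := by
    show g ^ 2 • x₀ = x₀
    rw [sq, mul_smul, hg1, hg2]
  have hodd : ¬ Odd (orderOf g) := by
    rintro ⟨k, hk⟩
    have hpow : g = (g ^ 2) ^ (k + 1) := by
      rw [← pow_mul]
      have h2k : 2 * (k + 1) = orderOf g + 1 := by omega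
      rw [h2k, pow_succ, pow_orderOf_eq_one, one_mul]
    have hfix : g ∈ MulAction.stabilizer G x₀ := by
      rw [hpow]
      exact Subgroup.pow_mem _ hg2x (k + 1)
    have : g • x₀ = x₀ := hfix
    rw [hg1] at this
    exact hxy this.symm
  have heven : Even (orderOf g) := (Nat.even_or_odd _).resolve_right hodd
  exact even_iff_two_dvd.mpr (dvd_trans (even_iff_two_dvd.mp heven) orderOf_dvd_card)
end

section
/- Let Λ be a ring, let A be a Λ-module with finitely many elements, and let G be a Λ-module with finitely many elements. Then |G| · ∑_{a ∈ A} |Sur_Λ(A/Λa, G)| = |A| · |Sur_Λ(A, G)|, where Λa denotes the submodule of A generated by a and |Sur_Λ(M, G)| denotes the number of surjective Λ-module homomorphisms M → G. Equivalently, the average over a uniformly random a ∈ A of the number of surjective Λ-module homomorphisms A/Λa → G equals |Sur_Λ(A,G)| / |G|. -/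
open scoped BigOperators

theorem quot_card (Λ : Type*) [Ring Λ] (A G : Type*)
    [AddCommGroup A] [Module Λ A]
    [AddCommGroup G] [Module Λ G] (a : A) :
    Nat.card {f : (A ⧸ Submodule.span Λ ({a} : Set A)) →ₗ[Λ] G // Function.Surjective f}
      = Nat.card {g : A →ₗ[Λ] G // Function.Surjective g ∧ g a = 0} := by
  set N := Submodule.span Λ ({a} : Set A) with hN
  have hker : ∀ g : A →ₗ[Λ] G, g a = 0 → N ≤ LinearMap.ker g := by
    intro g hg
    rw [hN, Submodule.span_singleton_le_iff_mem, LinearMap.mem_ker]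
    exact hg
  refine Nat.card_congr
    { toFun := fun f => ⟨f.1.comp N.mkQ, f.2.comp (Submodule.Quotient.mk_surjective N), ?_⟩,
      invFun := fun g => ⟨N.liftQ g.1 (hker g.1 g.2.2), ?_⟩,
      left_inv := ?_, right_inv := ?_ }
  · show f.1 (N.mkQ a) = 0
    have : N.mkQ a = 0 := (Submodule.Quotient.mk_eq_zero N).mpr
      (Submodule.mem_span_singleton_self a)
    rw [Submodule.mkQ_apply] at this ⊢
    rw [this, map_zero]
  · intro y
    obtain ⟨x, hx⟩ := g.2.1 y
    exact ⟨N.mkQ x, by simpa using hx⟩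
  · intro f
    ext x
    simp [Submodule.liftQ_apply]
  · intro g
    ext x
    simp [Submodule.liftQ_apply]

/-- Let `Λ` be a ring and `A`, `G` finite `Λ`-modules.  Then
`|G| ⬝ ∑_{a ∈ A} |Sur_Λ(A/Λa, G)| = |A| ⬝ |Sur_Λ(A, G)|`, i.e. the average over a uniform
random `a ∈ A` of the number of surjective `Λ`-module maps `A/Λa → G` is
`|Sur_Λ(A,G)|/|G|`. -/
theorem stmt_12 (Λ : Type*) [Ring Λ] (A G : Type*)
    [AddCommGroup A] [Module Λ A] [Fintype A]
    [AddCommGroup G] [Module Λ G] [Finite G] :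
    Nat.card G *
        ∑ a : A, Nat.card
          {f : (A ⧸ Submodule.span Λ ({a} : Set A)) →ₗ[Λ] G // Function.Surjective f}
      = Nat.card A * Nat.card {f : A →ₗ[Λ] G // Function.Surjective f} := by
  classical
  have _i : Fintype G := Fintype.ofFinite G
  have _f : Finite (A →ₗ[Λ] G) := Finite.of_injective (fun g => (g : A → G)) DFunLike.coe_injective
  have _i2 : Fintype (A →ₗ[Λ] G) := Fintype.ofFinite _
  simp_rw [quot_card Λ A G]
  have h1 : ∀ a : A, Nat.card {g : A →ₗ[Λ] G // Function.Surjective g ∧ g a = 0}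
      = (Finset.univ.filter (fun g : A →ₗ[Λ] G => Function.Surjective g ∧ g a = 0)).card := by
    intro a
    rw [Nat.card_eq_fintype_card, Fintype.card_subtype]
  simp_rw [h1, Finset.card_filter]
  rw [Finset.sum_comm]
  have h2 : ∀ g : A →ₗ[Λ] G, Function.Surjective g →
      Nat.card G * (∑ a : A, if Function.Surjective g ∧ g a = 0 then 1 else 0) = Nat.card A := by
    intro g hg
    have : (∑ a : A, if Function.Surjective g ∧ g a = 0 then 1 else 0)
        = Nat.card {x : A // g x = 0} := by
      rw [Nat.card_eq_fintype_card, Fintype.card_subtype, Finset.card_filter]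
      exact Finset.sum_congr rfl (fun a _ => by simp [hg])
    rw [this]
    have hker : Nat.card {x : A // g x = 0} = Nat.card g.toAddMonoidHom.ker := by
      exact Nat.card_congr (Equiv.subtypeEquivRight (fun x => by
        simp [AddMonoidHom.mem_ker])).symm
    have hquot : Nat.card (A ⧸ g.toAddMonoidHom.ker) = Nat.card G :=
      Nat.card_congr (QuotientAddGroup.quotientKerEquivOfSurjective g.toAddMonoidHom hg).toEquiv
    rw [hker, ← hquot, ← AddSubgroup.card_eq_card_quotient_mul_card_addSubgroup]
  rw [Finset.mul_sum]
  have h3 : ∀ g ∈ Finset.univ (α := A →ₗ[Λ] G),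
      Nat.card G * (∑ a : A, if Function.Surjective g ∧ g a = 0 then 1 else 0)
      = if Function.Surjective g then Nat.card A else 0 := by
    intro g _
    by_cases hg : Function.Surjective g
    · rw [h2 g hg, if_pos hg]
    · simp [hg]
  rw [Finset.sum_congr rfl h3, Finset.sum_ite, Finset.sum_const_zero, add_zero,
    Finset.sum_const, smul_eq_mul,
    Nat.card_eq_fintype_card (α := {f : A →ₗ[Λ] G // Function.Surjective f}),
    Fintype.card_subtype, mul_comm]
end
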